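/- arXiv:2212.09055 — 9 statements merged into one kernel-verified Lean document; each statement's English description precedes it below -/
import Mathlib

section
/- If G₁ and G₂ are finite groups of coprime orders, then S(G₁ × G₂) = S(G₁) · S(G₂); equivalently, the function f(G) = S(G)/|G| is multiplicative on direct products of groups of coprime orders. -/
section Aux

variable {M N : Type*} [Group M] [Group N]

/-- If the orders are coprime, any automorphism of `M × N` sends `(x, 1)` to an
element with trivial second component. -/
lemma snd_apply_eq_one [Finite M] [Finite N]
    (h : (Nat.card M).Coprime (Nat.card N)) (e : (M × N) ≃* (M × N)) (x : M) :
    (e (x, 1)).2 = 1 := by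
  have d1 : orderOf (e (x, 1)).2 ∣ Nat.card M := by
    have h1 : orderOf (e (x, 1)).2 ∣ orderOf (e (x, 1)) :=
      orderOf_map_dvd (MonoidHom.snd M N) _
    have hA : orderOf (e (x, 1)) ∣ orderOf ((x, 1) : M × N) :=
      orderOf_map_dvd e.toMonoidHom _
    have hB : orderOf ((x, 1) : M × N) ∣ Nat.card M :=
      orderOf_dvd_of_pow_eq_one (by rw [Prod.pow_mk]; simp [pow_card_eq_one'])
    exact h1.trans (hA.trans hB)
  have d2 : orderOf (e (x, 1)).2 ∣ Nat.card N := orderOf_dvd_natCard _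
  have : orderOf (e (x, 1)).2 = 1 :=
    Nat.eq_one_of_dvd_one (h ▸ Nat.dvd_gcd d1 d2)
  exact orderOf_eq_one_iff.mp this

lemma fst_apply_eq_one [Finite M] [Finite N]
    (h : (Nat.card M).Coprime (Nat.card N)) (e : (M × N) ≃* (M × N)) (y : N) :
    (e (1, y)).1 = 1 := by
  let c : (M × N) ≃* (N × M) := MulEquiv.prodComm
  have := snd_apply_eq_one h.symm (c.symm.trans (e.trans c)).symm.symm y
  simpa [c, MulEquiv.prodComm] using this

/-- Prod of automorphisms as a map into `MulAut (M × N)`. -/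
noncomputable def autProdHom : MulAut M × MulAut N →* MulAut (M × N) where
  toFun p := MulEquiv.prodCongr p.1 p.2
  map_one' := by ext x <;> rfl
  map_mul' p q := by ext x <;> rfl

lemma autProdHom_bijective [Finite M] [Finite N]
    (h : (Nat.card M).Coprime (Nat.card N)) :
    Function.Bijective (autProdHom : MulAut M × MulAut N →* MulAut (M × N)) := by
  constructor
  · intro p q hpq
    have h1 : ∀ x : M × N, (MulEquiv.prodCongr p.1 p.2) x = (MulEquiv.prodCongr q.1 q.2) x := by
      intro x; exact DFunLike.congr_fun hpq x
    refine Prod.ext ?_ ?_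
    · ext x
      have := h1 (x, 1)
      exact congrArg Prod.fst this
    · ext y
      have := h1 (1, y)
      exact congrArg Prod.snd this
  · intro e
    -- build e₁ and e₂
    have key1 : ∀ x : M, e (x, 1) = ((e (x, 1)).1, 1) := fun x =>
      Prod.ext rfl (snd_apply_eq_one h e x)
    have key2 : ∀ y : N, e (1, y) = (1, (e (1, y)).2) := fun y =>
      Prod.ext (fst_apply_eq_one h e y) rfl
    have key1' : ∀ x : M, e.symm (x, 1) = ((e.symm (x, 1)).1, 1) := fun x =>
      Prod.ext rfl (snd_apply_eq_one h e.symm x)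
    have key2' : ∀ y : N, e.symm (1, y) = (1, (e.symm (1, y)).2) := fun y =>
      Prod.ext (fst_apply_eq_one h e.symm y) rfl
    refine ⟨(⟨⟨fun x => (e (x, 1)).1, fun x => (e.symm (x, 1)).1, ?_, ?_⟩, ?_⟩,
            ⟨⟨fun y => (e (1, y)).2, fun y => (e.symm (1, y)).2, ?_, ?_⟩, ?_⟩), ?_⟩
    · intro x
      have : e.symm (e (x, 1)) = (x, 1) := e.symm_apply_apply _
      rw [key1 x] at this
      exact congrArg Prod.fst this
    · intro x
      have : e (e.symm (x, 1)) = (x, 1) := e.apply_symm_apply _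
      rw [key1' x] at this
      exact congrArg Prod.fst this
    · intro x y
      have : e ((x, 1) * (y, 1)) = e (x, 1) * e (y, 1) := map_mul e _ _
      simpa using congrArg Prod.fst this
    · intro y
      have : e.symm (e (1, y)) = (1, y) := e.symm_apply_apply _
      rw [key2 y] at this
      exact congrArg Prod.snd this
    · intro y
      have : e (e.symm (1, y)) = (1, y) := e.apply_symm_apply _
      rw [key2' y] at this
      exact congrArg Prod.snd this
    · intro x y
      have : e ((1, x) * (1, y)) = e (1, x) * e (1, y) := map_mul e _ _
      simpa using congrArg Prod.snd this
    · ext ⟨x, y⟩ <;>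
      · have heq : ((e (x, 1)).1, (e (1, y)).2) = e (x, y) := by
          have hm : e ((x, 1) * (1, y)) = e (x, 1) * e (1, y) := map_mul e _ _
          rw [show ((x, 1) * (1, y) : M × N) = (x, y) by simp] at hm
          rw [hm, key1 x, key2 y]
          simp
        first
          | exact congrArg Prod.fst heq
          | exact congrArg Prod.snd heq

lemma card_mulAut_prod [Finite M] [Finite N]
    (h : (Nat.card M).Coprime (Nat.card N)) :
    Nat.card (MulAut (M × N)) = Nat.card (MulAut M) * Nat.card (MulAut N) := by
  rw [← Nat.card_prod]
  exact (Nat.card_eq_of_bijective _ (autProdHom_bijective h)).symm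

end Aux

section SubgroupEquiv

variable {G₁ G₂ : Type*} [Group G₁] [Group G₂]

/-- For coprime orders, subgroups of `G₁ × G₂` correspond to pairs of subgroups. -/
noncomputable def subgroupProdEquiv [Finite G₁] [Finite G₂]
    (h : (Nat.card G₁).Coprime (Nat.card G₂)) :
    Subgroup G₁ × Subgroup G₂ ≃ Subgroup (G₁ × G₂) where
  toFun p := p.1.prod p.2
  invFun H := (H.map (MonoidHom.fst G₁ G₂), H.map (MonoidHom.snd G₁ G₂))
  left_inv p := by
    refine Prod.ext ?_ ?_
    · ext x
      simp only [Subgroup.mem_map, MonoidHom.coe_fst, Subgroup.mem_prod]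
      constructor
      · rintro ⟨⟨a, b⟩, ⟨ha, hb⟩, rfl⟩; exact ha
      · intro hx; exact ⟨(x, 1), ⟨hx, p.2.one_mem⟩, rfl⟩
    · ext y
      simp only [Subgroup.mem_map, MonoidHom.coe_snd, Subgroup.mem_prod]
      constructor
      · rintro ⟨⟨a, b⟩, ⟨ha, hb⟩, rfl⟩; exact hb
      · intro hy; exact ⟨(1, y), ⟨p.1.one_mem, hy⟩, rfl⟩
  right_inv H := by
    ext ⟨a, b⟩
    simp only [Subgroup.mem_prod, Subgroup.mem_map, MonoidHom.coe_fst, MonoidHom.coe_snd]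
    constructor
    · rintro ⟨⟨⟨a', b'⟩, hab', rfl⟩, ⟨⟨a'', b''⟩, hab'', rfl⟩⟩
      -- (a, b') ∈ H and (a'', b) ∈ H; show (a, b) ∈ H
      have hfst : ∀ u : G₁, ∀ v : G₂, (u, v) ∈ H → (u, 1) ∈ H := by
        intro u v huv
        have hv : v ^ Nat.card G₂ = 1 := pow_card_eq_one'
        have hcop : (Nat.card G₂).Coprime (orderOf u) :=
          (h.symm).coprime_dvd_right (orderOf_dvd_natCard u)
        obtain ⟨m, hm⟩ := exists_pow_eq_self_of_coprime hcop
        have : ((u, v) : G₁ × G₂) ^ (Nat.card G₂ * m) = (u, 1) := by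
          rw [Prod.pow_mk]
          refine Prod.ext ?_ ?_
          · show u ^ (Nat.card G₂ * m) = u
            rw [pow_mul]; exact hm
          · show v ^ (Nat.card G₂ * m) = 1
            rw [pow_mul, hv, one_pow]
        exact this ▸ H.pow_mem huv _
      have hsnd : ∀ u : G₁, ∀ v : G₂, (u, v) ∈ H → ((1 : G₁), v) ∈ H := by
        intro u v huv
        have hu : u ^ Nat.card G₁ = 1 := pow_card_eq_one'
        have hcop : (Nat.card G₁).Coprime (orderOf v) :=
          h.coprime_dvd_right (orderOf_dvd_natCard v)
        obtain ⟨m, hm⟩ := exists_pow_eq_self_of_coprime hcop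
        have : ((u, v) : G₁ × G₂) ^ (Nat.card G₁ * m) = (1, v) := by
          rw [Prod.pow_mk]
          refine Prod.ext ?_ ?_
          · show u ^ (Nat.card G₁ * m) = 1
            rw [pow_mul, hu, one_pow]
          · show v ^ (Nat.card G₁ * m) = v
            rw [pow_mul]; exact hm
        exact this ▸ H.pow_mem huv _
      have h1 : ((a', 1) : G₁ × G₂) ∈ H := hfst a' b' hab'
      have h2 : ((1, b'') : G₁ × G₂) ∈ H := hsnd a'' b'' hab''
      have := H.mul_mem h1 h2
      simpa using this
    · intro hab
      exact ⟨⟨(a, b), hab, rfl⟩, ⟨(a, b), hab, rfl⟩⟩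

end SubgroupEquiv

/-- `S G` is the sum, over all subgroups `H` of `G`, of the number of
automorphisms of `H`. -/
noncomputable def S (G : Type*) [Group G] : ℕ :=
  ∑ᶠ H : Subgroup G, Nat.card (MulAut ↥H)

/-- If `G₁` and `G₂` are finite groups of coprime orders, then
`S(G₁ × G₂) = S(G₁) · S(G₂)`. -/
theorem stmt_2 (G₁ G₂ : Type*) [Group G₁] [Group G₂] [Finite G₁] [Finite G₂]
    (h : (Nat.card G₁).Coprime (Nat.card G₂)) :
    S (G₁ × G₂) = S G₁ * S G₂ := by
  classical
  haveI : Fintype (Subgroup (G₁ × G₂)) := Fintype.ofFinite _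
  haveI : Fintype (Subgroup G₁) := Fintype.ofFinite _
  haveI : Fintype (Subgroup G₂) := Fintype.ofFinite _
  unfold S
  rw [finsum_eq_sum_of_fintype, finsum_eq_sum_of_fintype, finsum_eq_sum_of_fintype]
  rw [← Equiv.sum_comp (subgroupProdEquiv h) (fun H => Nat.card (MulAut ↥H))]
  rw [Fintype.sum_prod_type, Finset.sum_mul_sum]
  refine Finset.sum_congr rfl fun A _ => Finset.sum_congr rfl fun B _ => ?_
  show Nat.card (MulAut ↥(A.prod B)) = _
  have e1 : ↥(A.prod B) ≃* ↥A × ↥B := Subgroup.prodEquiv A B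
  have : Nat.card (MulAut ↥(A.prod B)) = Nat.card (MulAut (↥A × ↥B)) :=
    Nat.card_congr (MulAut.congr e1).toEquiv
  rw [this]
  exact card_mulAut_prod
    ((h.coprime_dvd_left (Subgroup.card_subgroup_dvd_card A)).coprime_dvd_right
      (Subgroup.card_subgroup_dvd_card B))
end

section
/- For any finite non-cyclic group G, f(G) ≥ 1 + 1/|Z(G)|, where Z(G) is the center of G; equivalently, |Z(G)| · S(G) ≥ (|Z(G)| + 1) · |G|. -/
open Finset


/-- For any finite non-cyclic group `G`, `f(G) ≥ 1 + 1/|Z(G)|`, i.e.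
`|Z(G)| · S(G) ≥ (|Z(G)| + 1) · |G|`. -/
theorem stmt_5 (G : Type*) [Group G] [Finite G] (h : ¬ IsCyclic G) :
    (Nat.card (Subgroup.center G) + 1) * Nat.card G ≤
      Nat.card (Subgroup.center G) * S G := by
  classical
  have := Fintype.ofFinite G
  -- ker of conj is the center
  have hker : (MulAut.conj : G →* MulAut G).ker = Subgroup.center G := by
    ext g
    simp only [MonoidHom.mem_ker, Subgroup.mem_center_iff]
    constructor
    · intro hg x
      have hx : g * x * g⁻¹ = x := by
        have := DFunLike.congr_fun (congrArg MulEquiv.toEquiv hg) x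
        simpa [MulAut.conj_apply] using this
      exact (mul_inv_eq_iff_eq_mul.mp hx).symm
    · intro hg
      ext x
      simp [MulAut.conj_apply, ← hg x]
  -- |G| ≤ |Z| * |Aut G|
  have hGZ : Nat.card G ≤ Nat.card (Subgroup.center G) * Nat.card (MulAut G) := by
    rw [Subgroup.card_eq_card_quotient_mul_card_subgroup (Subgroup.center G), mul_comm]
    refine Nat.mul_le_mul_left _ ?_
    rw [← hker]
    exact Nat.card_le_card_of_injective _ (QuotientGroup.kerLift_injective MulAut.conj)
  -- counting: ∑ over subgroups of fiber cards = |G|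
  have hcount : Fintype.card G
      = ∑ H : Subgroup G, (univ.filter fun g : G => Subgroup.zpowers g = H).card := by
    rw [← card_univ]
    exact Finset.card_eq_sum_card_fiberwise (fun x _ => mem_univ _)
  -- fiber card ≤ |Aut H|
  have hfiber : ∀ H : Subgroup G,
      (univ.filter fun g : G => Subgroup.zpowers g = H).card ≤ Nat.card (MulAut ↥H) := by
    intro H
    rcases (univ.filter fun g : G => Subgroup.zpowers g = H).eq_empty_or_nonempty with he | ⟨g, hg⟩
    · simp [he]
    · simp only [mem_filter, mem_univ, true_and] at hg
      have hHc : IsCyclic ↥H := by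
        refine ⟨⟨⟨g, hg ▸ Subgroup.mem_zpowers g⟩, fun x => ?_⟩⟩
        obtain ⟨n, hn⟩ := (hg ▸ x.2 : (x : G) ∈ Subgroup.zpowers g)
        exact ⟨n, Subtype.ext (by push_cast; simpa using hn)⟩
      rw [IsCyclic.card_mulAut]
      have key : (univ.filter fun g : G => Subgroup.zpowers g = H).card
          = (univ.filter fun x : ↥H => orderOf x = Fintype.card ↥H).card := by
        apply Finset.card_bij (fun g hg => (⟨g, by
          simp only [mem_filter, mem_univ, true_and] at hg
          exact hg ▸ Subgroup.mem_zpowers g⟩ : ↥H))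
        · intro a ha
          simp only [mem_filter, mem_univ, true_and] at ha ⊢
          rw [Subgroup.orderOf_mk, ← Nat.card_zpowers, ha, Nat.card_eq_fintype_card]
        · intro a ha b hb hab
          simpa using congrArg Subtype.val hab
        · intro x hx
          simp only [mem_filter, mem_univ, true_and] at hx
          refine ⟨(x : G), ?_, Subtype.ext rfl⟩
          simp only [mem_filter, mem_univ, true_and]
          refine Subgroup.eq_of_le_of_card_ge (Subgroup.zpowers_le.2 x.2) ?_
          rw [Nat.card_zpowers, Subgroup.orderOf_coe, hx, Nat.card_eq_fintype_card]
      rw [key, Nat.card_eq_fintype_card, IsCyclic.card_orderOf_eq_totient dvd_rfl]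
  -- fiber over ⊤ is empty since G is not cyclic
  have htop : (univ.filter fun g : G => Subgroup.zpowers g = (⊤ : Subgroup G)).card = 0 := by
    rw [Finset.card_eq_zero, Finset.filter_eq_empty_iff]
    intro g _ hg
    exact h ⟨⟨g, fun x => hg.ge (Subgroup.mem_top x)⟩⟩
  -- |G| ≤ ∑_{H ≠ ⊤} |Aut H|
  have hineq : Nat.card G ≤ ∑ H ∈ univ.erase (⊤ : Subgroup G), Nat.card (MulAut ↥H) := by
    calc Nat.card G = Fintype.card G := Nat.card_eq_fintype_card
      _ = ∑ H : Subgroup G, (univ.filter fun g : G => Subgroup.zpowers g = H).card := hcount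
      _ = ∑ H ∈ univ.erase (⊤ : Subgroup G),
            (univ.filter fun g : G => Subgroup.zpowers g = H).card :=
          (Finset.sum_erase (f := fun H : Subgroup G =>
            (univ.filter fun g : G => Subgroup.zpowers g = H).card) univ htop).symm
      _ ≤ ∑ H ∈ univ.erase (⊤ : Subgroup G), Nat.card (MulAut ↥H) :=
          Finset.sum_le_sum fun H _ => hfiber H
  -- S G decomposition
  have hS : S G = Nat.card (MulAut G)
      + ∑ H ∈ univ.erase (⊤ : Subgroup G), Nat.card (MulAut ↥H) := by
    have hc : Nat.card (MulAut ↥(⊤ : Subgroup G)) = Nat.card (MulAut G) :=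
      Nat.card_congr (MulAut.congr Subgroup.topEquiv).toEquiv
    rw [S, finsum_eq_sum_of_fintype, ← Finset.add_sum_erase _ _ (mem_univ (⊤ : Subgroup G)), hc]
  calc (Nat.card (Subgroup.center G) + 1) * Nat.card G
      = Nat.card G + Nat.card (Subgroup.center G) * Nat.card G := by ring
    _ ≤ Nat.card (Subgroup.center G) * Nat.card (MulAut G)
        + Nat.card (Subgroup.center G)
          * ∑ H ∈ univ.erase (⊤ : Subgroup G), Nat.card (MulAut ↥H) :=
        Nat.add_le_add hGZ (Nat.mul_le_mul_left _ hineq)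
    _ = Nat.card (Subgroup.center G) * S G := by rw [hS]; ring
end

section
/- For any finite non-cyclic centerless group G (i.e. with trivial center), f(G) ≥ 2, i.e. S(G) ≥ 2|G|. -/
open Subgroup

section aux

variable {G : Type*} [Group G] [Finite G]
set_option linter.unusedSectionVars false

lemma aux_gen (g : G) (x : ↥(zpowers g)) : x ∈ zpowers (⟨g, mem_zpowers g⟩ : ↥(zpowers g)) := by
  obtain ⟨x, hx⟩ := x
  obtain ⟨n, hn⟩ := mem_zpowers_iff.mp hx
  exact mem_zpowers_iff.mpr ⟨n, by ext; simp [hn]⟩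

lemma aux_fiber_le (H : Subgroup G) :
    Nat.card {g : G // zpowers g = H} ≤ Nat.card (MulAut ↥H) := by
  rcases isEmpty_or_nonempty {g : G // zpowers g = H} with he | ⟨⟨g₀, hg₀⟩⟩
  · simp [Nat.card_of_isEmpty]
  · -- map each generator `g` of `H` to the automorphism sending `g₀` to `g`
    have horder : ∀ g : G, zpowers g = H → orderOf g = Nat.card H := by
      intro g hg
      rw [← Nat.card_zpowers, hg]
    refine Nat.card_le_card_of_injective (fun x => ?_) ?_
    · obtain ⟨g, hg⟩ := x
      have h1 : ∀ y : ↥H, y ∈ zpowers (⟨g₀, hg₀ ▸ mem_zpowers g₀⟩ : ↥H) := by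
        subst hg₀; exact aux_gen g₀
      have h2 : ∀ y : ↥H, y ∈ zpowers (⟨g, hg ▸ mem_zpowers g⟩ : ↥H) := by
        subst hg; exact aux_gen g
      have h3 : orderOf (⟨g₀, hg₀ ▸ mem_zpowers g₀⟩ : ↥H)
          = orderOf (⟨g, hg ▸ mem_zpowers g⟩ : ↥H) := by
        rw [Subgroup.orderOf_mk, Subgroup.orderOf_mk, horder g₀ hg₀, horder g hg]
      exact mulEquivOfOrderOfEq h1 h2 h3
    · rintro ⟨g, hg⟩ ⟨g', hg'⟩ h
      have h1 : ∀ y : ↥H, y ∈ zpowers (⟨g₀, hg₀ ▸ mem_zpowers g₀⟩ : ↥H) := by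
        subst hg₀; exact aux_gen g₀
      have := congrArg (fun e : MulAut ↥H => e ⟨g₀, hg₀ ▸ mem_zpowers g₀⟩) h
      simp only [mulEquivOfOrderOfEq_apply_gen] at this
      have hgg : g = g' := by simpa using this
      exact Subtype.ext hgg

lemma aux_sum_fibers :
    ∀ (s : Finset (Subgroup G)) (_ : Fintype G) (_ : Fintype (Subgroup G)),
      s = Finset.univ →
      ∑ H ∈ s, Nat.card {g : G // zpowers g = H} = Nat.card G := by
  classical
  intro s _ _ hs
  subst hs
  rw [Nat.card_eq_fintype_card, Finset.card_univ.symm,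
    Finset.card_eq_sum_card_fiberwise (f := fun g : G => zpowers g)
      (t := Finset.univ) (fun x _ => Finset.mem_univ _)]
  refine Finset.sum_congr rfl fun H _ => ?_
  rw [Nat.card_eq_fintype_card, Fintype.card_subtype]

lemma aux_card_le_aut (hc : Subgroup.center G = ⊥) : Nat.card G ≤ Nat.card (MulAut G) := by
  refine Nat.card_le_card_of_injective (MulAut.conj : G →* MulAut G) ?_
  intro a b hab
  have : ∀ x : G, a * x * a⁻¹ = b * x * b⁻¹ := fun x => by
    have := congrArg (fun e : MulAut G => e x) hab
    simpa [MulAut.conj] using this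
  have hmem : b⁻¹ * a ∈ Subgroup.center G := by
    rw [Subgroup.mem_center_iff]
    intro x
    have hx := this x
    have key : b * (x * (b⁻¹ * a)) = b * ((b⁻¹ * a) * x) := by
      calc b * (x * (b⁻¹ * a)) = (b * x * b⁻¹) * a := by group
      _ = (a * x * a⁻¹) * a := by rw [hx]
      _ = a * x := by group
      _ = b * ((b⁻¹ * a) * x) := by group
    exact mul_left_cancel key
  rw [hc, Subgroup.mem_bot] at hmem
  have : b * (b⁻¹ * a) = b * 1 := by rw [hmem]
  simpa using this

end aux

/-- For any finite non-cyclic centerless group `G`, `f(G) ≥ 2`, i.e. `S(G) ≥ 2|G|`. -/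
theorem stmt_6 (G : Type*) [Group G] [Finite G] (h : ¬ IsCyclic G)
    (hc : Subgroup.center G = ⊥) :
    2 * Nat.card G ≤ S G := by
  classical
  have _inst : Fintype G := Fintype.ofFinite G
  have _instS : Fintype (Subgroup G) := Fintype.ofFinite _
  have hS : S G = ∑ H : Subgroup G, Nat.card (MulAut ↥H) := finsum_eq_sum_of_fintype _
  -- The top subgroup contributes at least |G|
  have htop : Nat.card G ≤ Nat.card (MulAut ↥(⊤ : Subgroup G)) := by
    calc Nat.card G ≤ Nat.card (MulAut G) := aux_card_le_aut hc
    _ = Nat.card (MulAut ↥(⊤ : Subgroup G)) :=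
      (Nat.card_congr (MulAut.congr Subgroup.topEquiv).toEquiv).symm
  -- fiber of ⊤ is empty since G is not cyclic
  have hfibtop : Nat.card {g : G // zpowers g = (⊤ : Subgroup G)} = 0 := by
    rw [Nat.card_eq_zero]
    left
    refine ⟨fun ⟨g, hg⟩ => h ?_⟩
    exact ⟨⟨g, (Subgroup.eq_top_iff' _).mp hg⟩⟩
  -- the other subgroups contribute at least their fiber count, summing to |G|
  have hsum : ∑ H : Subgroup G, Nat.card {g : G // zpowers g = H} = Nat.card G :=
    aux_sum_fibers Finset.univ _inst _instS rfl
  have hrest : Nat.card G ≤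
      ∑ H ∈ Finset.univ.erase (⊤ : Subgroup G), Nat.card (MulAut ↥H) := by
    calc Nat.card G = ∑ H : Subgroup G, Nat.card {g : G // zpowers g = H} := hsum.symm
    _ = ∑ H ∈ Finset.univ.erase (⊤ : Subgroup G), Nat.card {g : G // zpowers g = H} := by
        rw [← Finset.add_sum_erase _ _ (Finset.mem_univ (⊤ : Subgroup G)), hfibtop, zero_add]
    _ ≤ ∑ H ∈ Finset.univ.erase (⊤ : Subgroup G), Nat.card (MulAut ↥H) :=
        Finset.sum_le_sum fun H _ => aux_fiber_le H
  calc 2 * Nat.card G = Nat.card G + Nat.card G := two_mul _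
  _ ≤ Nat.card (MulAut ↥(⊤ : Subgroup G)) +
      ∑ H ∈ Finset.univ.erase (⊤ : Subgroup G), Nat.card (MulAut ↥H) :=
      Nat.add_le_add htop hrest
  _ = ∑ H : Subgroup G, Nat.card (MulAut ↥H) :=
      Finset.add_sum_erase _ (fun H : Subgroup G => Nat.card (MulAut ↥H)) (Finset.mem_univ ⊤)
  _ = S G := hS.symm
end

section
/- For any finite non-abelian group G, f(G) ≥ 1 + 4/|G|, i.e. S(G) ≥ |G| + 4. -/
open Subgroup Finset

lemma zpowers_isCyclic' {G : Type*} [Group G] (g : G) : IsCyclic ↥(zpowers g) := by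
  refine ⟨⟨g, mem_zpowers g⟩, ?_⟩
  rintro ⟨x, k, rfl⟩
  exact ⟨k, by ext; simp⟩

lemma four_le_card_mulAut {G : Type*} [Group G] [Finite G]
    (h : ¬ ∀ a b : G, a * b = b * a) : 4 ≤ Nat.card (MulAut G) := by
  have hker : (MulAut.conj : G →* MulAut G).ker = Subgroup.center G := by
    ext x
    simp only [MonoidHom.mem_ker, Subgroup.mem_center_iff]
    constructor
    · intro hx y
      have := congrArg (fun f : MulAut G => f y) hx
      simp only [MulAut.conj_apply, MulAut.one_apply] at this
      rw [mul_inv_eq_iff_eq_mul] at this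
      exact this.symm
    · intro hx
      ext y
      simp only [MulAut.conj_apply, MulAut.one_apply]
      rw [mul_inv_eq_iff_eq_mul, hx y]
  have hnc : ¬ IsCyclic (G ⧸ Subgroup.center G) := by
    intro hc
    exact h (commutative_of_cyclic_center_quotient (QuotientGroup.mk' (Subgroup.center G))
      (by rw [QuotientGroup.ker_mk']))
  have hp2 : Fact (Nat.Prime 2) := ⟨by norm_num⟩
  have hp3 : Fact (Nat.Prime 3) := ⟨by norm_num⟩
  have h4 : 4 ≤ Nat.card (G ⧸ Subgroup.center G) := by
    by_contra hlt
    push_neg at hlt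
    have hpos : 0 < Nat.card (G ⧸ Subgroup.center G) := Nat.card_pos
    interval_cases hn : Nat.card (G ⧸ Subgroup.center G)
    · exact hnc (@isCyclic_of_subsingleton _ _ (Nat.card_eq_one_iff_unique.mp hn).1)
    · exact hnc (isCyclic_of_prime_card hn)
    · exact hnc (isCyclic_of_prime_card hn)
  calc 4 ≤ Nat.card (G ⧸ Subgroup.center G) := h4
    _ = Nat.card (G ⧸ (MulAut.conj : G →* MulAut G).ker) := by rw [hker]
    _ ≤ Nat.card (MulAut G) :=
        Nat.card_le_card_of_injective _ (QuotientGroup.kerLift_injective _)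

/-- For any finite non-abelian group `G`, `f(G) ≥ 1 + 4/|G|`, i.e. `S(G) ≥ |G| + 4`. -/
theorem stmt_7 (G : Type*) [Group G] [Finite G] (h : ¬ ∀ a b : G, a * b = b * a) :
    Nat.card G + 4 ≤ S G := by
  classical
  cases nonempty_fintype G
  have : Fintype (Subgroup G) := Fintype.ofFinite _
  have hS : S G = ∑ H : Subgroup G, Nat.card (MulAut ↥H) := finsum_eq_sum_of_fintype _
  set f : Subgroup G → ℕ := fun H => Nat.card (MulAut ↥H) with hf
  set T : Finset (Subgroup G) := univ.filter (fun H => IsCyclic ↥H) with hT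
  have htop : (⊤ : Subgroup G) ∉ T := by
    simp only [hT, mem_filter, mem_univ, true_and]
    intro hc
    have : IsCyclic G := isCyclic_of_surjective _ Subgroup.topEquiv.surjective
    refine h (commutative_of_cyclic_center_quotient (MonoidHom.id G) ?_)
    intro x hx
    rw [MonoidHom.mem_ker, MonoidHom.id_apply] at hx
    subst hx
    exact Subgroup.one_mem _
  have hA : Nat.card G ≤ ∑ H ∈ T, f H := by
    have hcard : Fintype.card G = ∑ H ∈ T, (univ.filter fun g : G => zpowers g = H).card := by
      apply Finset.card_eq_sum_card_fiberwise
      intro g _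
      simp only [hT, mem_coe, mem_filter, mem_univ, true_and]
      exact zpowers_isCyclic' g
    have hfib : ∀ H ∈ T, (univ.filter fun g : G => zpowers g = H).card ≤ f H := by
      intro H hH
      have hcyc : IsCyclic ↥H := by simpa [hT] using hH
      have hfH : f H = Nat.totient (Nat.card ↥H) := IsCyclic.card_mulAut ↥H
      have hle : (univ.filter fun g : G => zpowers g = H).card
          ≤ (univ.filter fun x : ↥H => orderOf x = Fintype.card ↥H).card := by
        apply Finset.card_le_card_of_injOn
          (fun g => if hg : g ∈ H then (⟨g, hg⟩ : ↥H) else 1)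
        · intro g hg
          simp only [mem_coe, mem_filter, mem_univ, true_and] at hg ⊢
          have hgH : g ∈ H := hg ▸ mem_zpowers g
          rw [dif_pos hgH, Subgroup.orderOf_mk, ← Nat.card_zpowers, hg,
            Nat.card_eq_fintype_card]
        · intro a ha b hb hab
          simp only [mem_coe, mem_filter, mem_univ, true_and] at ha hb
          have haH : a ∈ H := ha ▸ mem_zpowers a
          have hbH : b ∈ H := hb ▸ mem_zpowers b
          simp only [dif_pos haH, dif_pos hbH] at hab
          exact congrArg Subtype.val hab
      rw [hfH, Nat.card_eq_fintype_card]
      exact hle.trans (le_of_eq (IsCyclic.card_orderOf_eq_totient dvd_rfl))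
    calc Nat.card G = Fintype.card G := Nat.card_eq_fintype_card
      _ = _ := hcard
      _ ≤ ∑ H ∈ T, f H := Finset.sum_le_sum hfib
  have hB : 4 ≤ f ⊤ := by
    have heq : Nat.card (MulAut ↥(⊤ : Subgroup G)) = Nat.card (MulAut G) :=
      Nat.card_congr (MulAut.congr Subgroup.topEquiv).toEquiv
    rw [hf]; dsimp only; rw [heq]
    exact four_le_card_mulAut h
  calc Nat.card G + 4 ≤ (∑ H ∈ T, f H) + f ⊤ := Nat.add_le_add hA hB
    _ = ∑ H ∈ insert ⊤ T, f H := by rw [Finset.sum_insert htop]; ring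
    _ ≤ ∑ H : Subgroup G, f H := Finset.sum_le_sum_of_subset (Finset.subset_univ _)
    _ = S G := hS.symm
end

section
/- Let p be a prime and let G ≅ ∏_{i=1}^{k} Z_{p^{n_i}} be a finite abelian p-group, where 1 ≤ n₁ ≤ n₂ ≤ ... ≤ n_k. For r = 1,...,k, set a_r = max{ s | n_s = n_r } and b_r = min{ s | n_s = n_r }. Then |Aut(G)| = ∏_{i=1}^{k} (p^{a_i} − p^{i−1}) · ∏_{u=1}^{k} p^{n_u (k − a_u)} · ∏_{v=1}^{k} p^{(n_v − 1)(k − b_v + 1)}. -/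
section ZModCount

lemma card_fiber_red {p : ℕ} (hp : p.Prime) (m : ℕ) (hm : 1 ≤ m) (c : ZMod p) :
    Nat.card {z : ZMod (p ^ m) // ((z.val : ℕ) : ZMod p) = c} = p ^ (m - 1) := by
  haveI : NeZero p := ⟨hp.ne_zero⟩
  haveI : NeZero (p ^ m) := ⟨pow_ne_zero _ hp.ne_zero⟩
  haveI : NeZero (p ^ (m - 1)) := ⟨pow_ne_zero _ hp.ne_zero⟩
  obtain ⟨m', rfl⟩ : ∃ m', m = m' + 1 := ⟨m - 1, by omega⟩
  simp only [Nat.add_sub_cancel]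
  have hpm : p ^ (m' + 1) = p * p ^ m' := by rw [pow_succ, mul_comm]
  have key : ∀ w : ZMod (p ^ m'), c.val + p * w.val < p ^ (m' + 1) := by
    intro w
    calc c.val + p * w.val < p + p * w.val := Nat.add_lt_add_right (ZMod.val_lt c) _
      _ ≤ p + p * (p ^ m' - 1) :=
          Nat.add_le_add_left (Nat.mul_le_mul_left _ (Nat.le_pred_of_lt (ZMod.val_lt w))) _
      _ = p * (1 + (p ^ m' - 1)) := by ring
      _ = p * p ^ m' := by
          rw [Nat.add_sub_cancel' (Nat.one_le_iff_ne_zero.2 (pow_ne_zero _ hp.ne_zero))]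
      _ = p ^ (m' + 1) := hpm.symm
  have e : ZMod (p ^ m') ≃ {z : ZMod (p ^ (m' + 1)) // ((z.val : ℕ) : ZMod p) = c} := by
    refine ⟨fun w => ⟨((c.val + p * w.val : ℕ) : ZMod (p ^ (m' + 1))), ?_⟩,
      fun z => ((z.1.val / p : ℕ) : ZMod (p ^ m')), ?_, ?_⟩
    · rw [ZMod.val_cast_of_lt (key w)]
      push_cast
      simp [ZMod.natCast_self, ZMod.natCast_val, ZMod.cast_id]
    · intro w
      simp only [ZMod.val_cast_of_lt (key w)]
      rw [Nat.add_mul_div_left _ _ hp.pos, Nat.div_eq_of_lt (ZMod.val_lt c), zero_add]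
      exact ZMod.natCast_rightInverse w
    · rintro ⟨z, hz⟩
      have hmod : z.val % p = c.val := by
        have := congrArg ZMod.val hz
        rwa [ZMod.val_natCast] at this
      have hlt : z.val / p < p ^ m' := by
        apply Nat.div_lt_of_lt_mul
        rw [← hpm]; exact ZMod.val_lt z
      simp only [ZMod.val_cast_of_lt hlt]
      have hv : (c.val + p * (z.val / p) : ℕ) = z.val := by rw [← hmod, Nat.mod_add_div]
      simp only [hv]
      exact Subtype.ext (ZMod.natCast_rightInverse z)
  rw [← Nat.card_congr e, Nat.card_zmod]

lemma torsion_iff_dvd {p : ℕ} (hp : p.Prime) (m l : ℕ) (hlm : l ≤ m) (z : ZMod (p ^ m)) :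
    p ^ l • z = 0 ↔ p ^ (m - l) ∣ z.val := by
  haveI : NeZero (p ^ m) := ⟨pow_ne_zero _ hp.ne_zero⟩
  have hz : z = ((z.val : ℕ) : ZMod (p ^ m)) := (ZMod.natCast_rightInverse z).symm
  rw [nsmul_eq_mul]
  conv_lhs => rw [hz]
  rw [← Nat.cast_mul, ZMod.natCast_eq_zero_iff]
  have h2 : p ^ m = p ^ l * p ^ (m - l) := by rw [← pow_add, Nat.add_sub_cancel' hlm]
  generalize z.val = v
  rw [h2, mul_dvd_mul_iff_left (a := p ^ l) (pow_ne_zero _ hp.ne_zero)]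

lemma card_torsion {p : ℕ} (hp : p.Prime) (m l : ℕ) (hlm : l ≤ m) :
    Nat.card {z : ZMod (p ^ m) // p ^ l • z = 0} = p ^ l := by
  haveI : NeZero (p ^ m) := ⟨pow_ne_zero _ hp.ne_zero⟩
  haveI : NeZero (p ^ l) := ⟨pow_ne_zero _ hp.ne_zero⟩
  have hpm : p ^ m = p ^ (m - l) * p ^ l := by rw [← pow_add, Nat.sub_add_cancel hlm]
  have hpos : 0 < p ^ (m - l) := pow_pos hp.pos _
  have e : ZMod (p ^ l) ≃ {z : ZMod (p ^ m) // p ^ l • z = 0} := by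
    refine ⟨fun w => ⟨((p ^ (m - l) * w.val : ℕ) : ZMod (p ^ m)), ?_⟩,
      fun z => ((z.1.val / p ^ (m - l) : ℕ) : ZMod (p ^ l)), ?_, ?_⟩
    · rw [torsion_iff_dvd hp m l hlm, ZMod.val_cast_of_lt]
      · exact Dvd.intro _ rfl
      · rw [hpm]
        exact mul_lt_mul_of_pos_left (ZMod.val_lt w) hpos
    · intro w
      have hlt : p ^ (m - l) * w.val < p ^ m := by
        rw [hpm]; exact mul_lt_mul_of_pos_left (ZMod.val_lt w) hpos
      simp only [ZMod.val_cast_of_lt hlt]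
      rw [Nat.mul_div_cancel_left _ hpos]
      exact ZMod.natCast_rightInverse w
    · rintro ⟨z, hz⟩
      rw [torsion_iff_dvd hp m l hlm] at hz
      have hlt : z.val / p ^ (m - l) < p ^ l := by
        apply Nat.div_lt_of_lt_mul
        rw [← hpm]; exact ZMod.val_lt z
      apply Subtype.ext
      simp only [ZMod.val_cast_of_lt hlt, Nat.mul_div_cancel' hz]
      exact ZMod.natCast_rightInverse z
  rw [← Nat.card_congr e, Nat.card_zmod]

lemma torsion_red_zero {p : ℕ} (hp : p.Prime) (m l : ℕ) (hlm : l < m) (z : ZMod (p ^ m))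
    (hz : p ^ l • z = 0) : ((z.val : ℕ) : ZMod p) = 0 := by
  rw [torsion_iff_dvd hp m l hlm.le] at hz
  rw [ZMod.natCast_eq_zero_iff]
  exact dvd_trans (dvd_pow_self p (Nat.sub_ne_zero_of_lt hlm)) hz

end ZModCount

section Red
variable {p k : ℕ} {n : Fin k → ℕ}

/-- coordinatewise reduction mod p -/
def piRed (p : ℕ) (n : Fin k → ℕ) (hpos : ∀ i, 1 ≤ n i) :
    (∀ i : Fin k, ZMod (p ^ n i)) →+ (Fin k → ZMod p) where
  toFun x i := ZMod.castHom (dvd_pow_self p (Nat.one_le_iff_ne_zero.mp (hpos i))) (ZMod p) (x i)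
  map_zero' := by funext i; simp
  map_add' x y := by
    funext i
    exact map_add (ZMod.castHom (dvd_pow_self p (Nat.one_le_iff_ne_zero.mp (hpos i))) (ZMod p))
      (x i) (y i)

variable (hp : p.Prime) (hpos : ∀ i, 1 ≤ n i)

lemma piRed_apply (hp : p.Prime) (hpos : ∀ i, 1 ≤ n i) (x : ∀ i : Fin k, ZMod (p ^ n i))
    (i : Fin k) : piRed p n hpos x i = (((x i).val : ℕ) : ZMod p) := by
  haveI : NeZero (p ^ n i) := ⟨pow_ne_zero _ hp.ne_zero⟩
  simp [piRed, ZMod.castHom_apply, ZMod.natCast_val]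

lemma piRed_surjective (hp : p.Prime) (hpos : ∀ i, 1 ≤ n i) :
    Function.Surjective (piRed p n hpos) := by
  haveI : NeZero p := ⟨hp.ne_zero⟩
  intro y
  refine ⟨fun i => (((y i).val : ℕ) : ZMod (p ^ n i)), ?_⟩
  funext i
  simp only [piRed, AddMonoidHom.coe_mk, ZeroHom.coe_mk, map_natCast]
  exact ZMod.natCast_rightInverse (y i)

lemma nakayama (hp : p.Prime) (hpos : ∀ i, 1 ≤ n i)
    (φ : (∀ i : Fin k, ZMod (p ^ n i)) →+ (∀ i : Fin k, ZMod (p ^ n i)))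
    (h : Function.Surjective ((piRed p n hpos) ∘ φ)) : Function.Surjective φ := by
  haveI : ∀ i : Fin k, NeZero (p ^ n i) := fun i => ⟨pow_ne_zero _ hp.ne_zero⟩
  set N := Finset.univ.sup n with hN
  have kill : ∀ u : (∀ i : Fin k, ZMod (p ^ n i)), p ^ N • u = 0 := by
    intro u; funext i
    have hdvd : p ^ n i ∣ p ^ N := pow_dvd_pow p (Finset.le_sup (Finset.mem_univ i))
    have : ((p ^ N : ℕ) : ZMod (p ^ n i)) = 0 := (ZMod.natCast_eq_zero_iff _ _).2 hdvd
    simp [Pi.smul_apply, nsmul_eq_mul, this]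
  have step : ∀ z : (∀ i : Fin k, ZMod (p ^ n i)), ∃ w u, z = φ w + p • u := by
    intro z
    obtain ⟨w, hw⟩ := h (piRed p n hpos z)
    refine ⟨w, fun i => ((((z - φ w) i).val / p : ℕ) : ZMod (p ^ n i)), ?_⟩
    have hker : ∀ i, p ∣ ((z - φ w) i).val := by
      intro i
      have h0 : piRed p n hpos (z - φ w) = 0 := by
        rw [map_sub, show piRed p n hpos (φ w) = piRed p n hpos z from hw, sub_self]
      have := congrFun h0 i
      rw [piRed_apply hp hpos, Pi.zero_apply] at this
      exact (ZMod.natCast_eq_zero_iff _ _).1 this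
    have : z - φ w = p • fun i => ((((z - φ w) i).val / p : ℕ) : ZMod (p ^ n i)) := by
      funext i
      simp only [Pi.smul_apply, nsmul_eq_mul, ← Nat.cast_ofNat, ← Nat.cast_mul]
      rw [Nat.mul_div_cancel' (hker i)]
      exact (ZMod.natCast_rightInverse _).symm
    rw [← this]; abel
  have iter : ∀ m (x : ∀ i : Fin k, ZMod (p ^ n i)), ∃ y u, x = φ y + p ^ m • u := by
    intro m
    induction m with
    | zero => exact fun x => ⟨0, x, by simp⟩
    | succ m ih =>
        intro x
        obtain ⟨y, u, hyu⟩ := ih x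
        obtain ⟨w, v, hwv⟩ := step u
        refine ⟨y + p ^ m • w, v, ?_⟩
        rw [hyu, hwv, map_add, AddMonoidHom.map_nsmul, smul_add, add_assoc, pow_succ, mul_smul]
  intro x
  obtain ⟨y, u, hyu⟩ := iter N x
  exact ⟨y, by rw [hyu, kill u, add_zero]⟩

/-- the mod-p matrix of an endomorphism -/
def matOf (p : ℕ) (n : Fin k → ℕ) (hpos : ∀ i, 1 ≤ n i)
    (φ : (∀ i : Fin k, ZMod (p ^ n i)) →+ (∀ i : Fin k, ZMod (p ^ n i))) :
    Matrix (Fin k) (Fin k) (ZMod p) :=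
  fun i j => piRed p n hpos (φ (Pi.single j 1)) i

lemma single_eq_val_smul (hp : p.Prime) (j : Fin k) (cz : ZMod (p ^ n j)) :
    Pi.single (M := fun i : Fin k => ZMod (p ^ n i)) j cz
      = cz.val • Pi.single (M := fun i : Fin k => ZMod (p ^ n i)) j 1 := by
  haveI : NeZero (p ^ n j) := ⟨pow_ne_zero _ hp.ne_zero⟩
  have h1 : cz.val • (1 : ZMod (p ^ n j)) = cz := by
    rw [nsmul_eq_mul, mul_one]; exact ZMod.natCast_rightInverse cz
  conv_lhs => rw [← h1]
  rw [Pi.single_smul]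

lemma piRed_matOf (hp : p.Prime) (hpos : ∀ i, 1 ≤ n i)
    (φ : (∀ i : Fin k, ZMod (p ^ n i)) →+ (∀ i : Fin k, ZMod (p ^ n i)))
    (x : ∀ i : Fin k, ZMod (p ^ n i)) :
    piRed p n hpos (φ x) = (matOf p n hpos φ).mulVec (piRed p n hpos x) := by
  haveI : ∀ i : Fin k, NeZero (p ^ n i) := fun i => ⟨pow_ne_zero _ hp.ne_zero⟩
  conv_lhs => rw [← Finset.univ_sum_single x]
  rw [map_sum, map_sum]
  funext i
  rw [Finset.sum_apply, Matrix.mulVec, dotProduct]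
  refine Finset.sum_congr rfl fun j _ => ?_
  rw [single_eq_val_smul hp j (x j), AddMonoidHom.map_nsmul, AddMonoidHom.map_nsmul]
  rw [Pi.smul_apply, nsmul_eq_mul, piRed_apply hp hpos x j]
  rw [mul_comm]
  rfl

lemma surjective_iff_isUnit_matOf (hp : p.Prime) (hpos : ∀ i, 1 ≤ n i)
    (φ : (∀ i : Fin k, ZMod (p ^ n i)) →+ (∀ i : Fin k, ZMod (p ^ n i))) :
    Function.Surjective φ ↔ IsUnit (matOf p n hpos φ) := by
  constructor
  · intro hs
    rw [← Matrix.mulVec_surjective_iff_isUnit]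
    intro y
    obtain ⟨g, hg⟩ := piRed_surjective hp hpos y
    obtain ⟨x, hx⟩ := hs g
    exact ⟨piRed p n hpos x, by rw [← piRed_matOf hp hpos, hx, hg]⟩
  · intro hu
    apply nakayama hp hpos
    intro y
    obtain ⟨v, hv⟩ := (Matrix.mulVec_surjective_iff_isUnit.2 hu) y
    obtain ⟨x, hx⟩ := piRed_surjective hp hpos v
    exact ⟨x, by rw [Function.comp_apply, piRed_matOf hp hpos, hx, hv]⟩

end Red

section Psi
variable {p k : ℕ} {n : Fin k → ℕ}

lemma nsmul_mod {A : Type*} [AddCommMonoid A] (M : ℕ) (z : A) (hz : M • z = 0) (u : ℕ) :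
    (u % M) • z = u • z := by
  conv_rhs => rw [← Nat.mod_add_div u M]
  rw [add_nsmul, mul_comm, mul_smul, hz, smul_zero, add_zero]

/-- endomorphism from torsion data -/
def endOf (p : ℕ) (n : Fin k → ℕ) (hp : p.Prime)
    (d : ∀ j i : Fin k, {z : ZMod (p ^ n i) // p ^ n j • z = 0}) :
    (∀ i : Fin k, ZMod (p ^ n i)) →+ (∀ i : Fin k, ZMod (p ^ n i)) where
  toFun x := fun i => ∑ j, (x j).val • (d j i).1
  map_zero' := by
    haveI : ∀ i : Fin k, NeZero (p ^ n i) := fun i => ⟨pow_ne_zero _ hp.ne_zero⟩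
    funext i
    simp [ZMod.val_zero]
  map_add' x y := by
    haveI : ∀ i : Fin k, NeZero (p ^ n i) := fun i => ⟨pow_ne_zero _ hp.ne_zero⟩
    funext i
    rw [Pi.add_apply, ← Finset.sum_add_distrib]
    refine Finset.sum_congr rfl fun j _ => ?_
    rw [Pi.add_apply, ZMod.val_add, nsmul_mod (p ^ n j) ((d j i : ZMod (p ^ n i))) (d j i).2, add_nsmul]

variable (hp : p.Prime) (hpos : ∀ i, 1 ≤ n i)

lemma endOf_single (hp : p.Prime) (hpos : ∀ i, 1 ≤ n i)
    (d : ∀ j i : Fin k, {z : ZMod (p ^ n i) // p ^ n j • z = 0}) (j i : Fin k) :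
    endOf p n hp d (Pi.single j 1) i = (d j i).1 := by
  haveI : ∀ i : Fin k, NeZero (p ^ n i) := fun i => ⟨pow_ne_zero _ hp.ne_zero⟩
  haveI : Fact (1 < p ^ n j) :=
    ⟨Nat.one_lt_pow (Nat.one_le_iff_ne_zero.mp (hpos j)) hp.one_lt⟩
  show (∑ j', ((Pi.single j (1 : ZMod (p ^ n j)) : ∀ i : Fin k, ZMod (p ^ n i)) j').val
      • (d j' i).1) = (d j i).1
  rw [Finset.sum_eq_single j]
  · rw [Pi.single_eq_same, ZMod.val_one, one_nsmul]
  · intro j' _ hj'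
    rw [Pi.single_eq_of_ne hj', ZMod.val_zero, zero_nsmul]
  · intro h; exact absurd (Finset.mem_univ j) h

lemma endOf_bijective (hp : p.Prime) (hpos : ∀ i, 1 ≤ n i) :
    Function.Bijective (endOf p n hp (k := k)) := by
  haveI : ∀ i : Fin k, NeZero (p ^ n i) := fun i => ⟨pow_ne_zero _ hp.ne_zero⟩
  constructor
  · intro d d' h
    funext j i
    apply Subtype.ext
    rw [← endOf_single hp hpos d j i, ← endOf_single hp hpos d' j i, h]
  · intro φ
    have hmem : ∀ j i : Fin k, p ^ n j • (φ (Pi.single j 1) i) = 0 := by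
      intro j i
      have h1 : p ^ n j • (Pi.single j (1 : ZMod (p ^ n j)) : ∀ i : Fin k, ZMod (p ^ n i))
          = 0 := by
        rw [← Pi.single_smul]
        have : p ^ n j • (1 : ZMod (p ^ n j)) = 0 := by
          rw [nsmul_eq_mul, mul_one, ZMod.natCast_self]
        rw [this, Pi.single_zero]
      calc p ^ n j • (φ (Pi.single j 1) i) = (p ^ n j • φ (Pi.single j 1)) i := rfl
        _ = φ (p ^ n j • Pi.single j 1) i := by rw [AddMonoidHom.map_nsmul]
        _ = 0 := by rw [h1, map_zero]; rfl
    refine ⟨fun j i => ⟨φ (Pi.single j 1) i, hmem j i⟩, ?_⟩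
    apply AddMonoidHom.ext
    intro x
    funext i
    show (∑ j, (x j).val • φ (Pi.single j 1) i) = φ x i
    have : ∀ j : Fin k, (x j).val • φ (Pi.single j 1) i
        = φ (Pi.single j (x j)) i := by
      intro j
      have h2 : Pi.single (M := fun i : Fin k => ZMod (p ^ n i)) j (x j)
          = (x j).val • Pi.single j 1 := single_eq_val_smul hp j (x j)
      rw [h2, AddMonoidHom.map_nsmul]
      rfl
    rw [Finset.sum_congr rfl fun j _ => this j, ← Finset.sum_apply,
      ← map_sum, Finset.univ_sum_single]

lemma matOf_endOf (hp : p.Prime) (hpos : ∀ i, 1 ≤ n i)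
    (d : ∀ j i : Fin k, {z : ZMod (p ^ n i) // p ^ n j • z = 0}) (i j : Fin k) :
    matOf p n hpos (endOf p n hp d) i j = (((d j i).1.val : ℕ) : ZMod p) := by
  rw [matOf, piRed_apply hp hpos, endOf_single hp hpos]

end Psi

section AB
variable {p k : ℕ} {n : Fin k → ℕ} {a b : Fin k → ℕ}

lemma card_fin_le (k c : ℕ) :
    (Finset.univ.filter fun i : Fin k => c ≤ (i : ℕ)).card = k - c := by
  rw [← Fintype.card_subtype]
  have e : {i : Fin k // c ≤ (i : ℕ)} ≃ Fin (k - c) := by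
    refine ⟨fun i => ⟨(i.1 : ℕ) - c, by have := i.1.isLt; have := i.2; omega⟩,
      fun j => ⟨⟨c + j.1, by have := j.isLt; omega⟩, Nat.le_add_right c j.1⟩, fun i => ?_, fun j => ?_⟩
    · apply Subtype.ext; apply Fin.ext
      have := i.2; simp only [Fin.val_mk]; omega
    · apply Fin.ext; simp only [Fin.val_mk]; omega
  rw [Fintype.card_congr e, Fintype.card_fin]

section
variable (hmono : Monotone n)
  (ha : ∀ r, a r = sSup {m : ℕ | ∃ s : Fin k, n s = n r ∧ m = (s : ℕ) + 1})
  (hb : ∀ r, b r = sInf {m : ℕ | ∃ s : Fin k, n s = n r ∧ m = (s : ℕ) + 1})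

lemma a_spec (ha : ∀ r, a r = sSup {m : ℕ | ∃ s : Fin k, n s = n r ∧ m = (s : ℕ) + 1})
    (r : Fin k) : (∃ s : Fin k, n s = n r ∧ a r = (s : ℕ) + 1) ∧
      ∀ s : Fin k, n s = n r → (s : ℕ) + 1 ≤ a r := by
  have hne : {m : ℕ | ∃ s : Fin k, n s = n r ∧ m = (s : ℕ) + 1}.Nonempty :=
    ⟨(r : ℕ) + 1, r, rfl, rfl⟩
  have hbdd : BddAbove {m : ℕ | ∃ s : Fin k, n s = n r ∧ m = (s : ℕ) + 1} := by
    refine ⟨k, ?_⟩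
    rintro m ⟨s, _, rfl⟩
    exact s.isLt
  constructor
  · have := Nat.sSup_mem hne hbdd
    rw [← ha] at this
    exact this
  · intro s hs
    rw [ha]
    exact le_csSup hbdd ⟨s, hs, rfl⟩

lemma b_spec (hb : ∀ r, b r = sInf {m : ℕ | ∃ s : Fin k, n s = n r ∧ m = (s : ℕ) + 1})
    (r : Fin k) : (∃ s : Fin k, n s = n r ∧ b r = (s : ℕ) + 1) ∧
      ∀ s : Fin k, n s = n r → b r ≤ (s : ℕ) + 1 := by
  have hne : {m : ℕ | ∃ s : Fin k, n s = n r ∧ m = (s : ℕ) + 1}.Nonempty :=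
    ⟨(r : ℕ) + 1, r, rfl, rfl⟩
  constructor
  · have := Nat.sInf_mem hne
    rw [← hb] at this
    exact this
  · intro s hs
    rw [hb]
    exact Nat.sInf_le ⟨s, hs, rfl⟩

lemma key_a (hmono : Monotone n)
    (ha : ∀ r, a r = sSup {m : ℕ | ∃ s : Fin k, n s = n r ∧ m = (s : ℕ) + 1})
    (i j : Fin k) : (i : ℕ) < a j ↔ n i ≤ n j := by
  obtain ⟨⟨s₀, hs₀, has⟩, hub⟩ := a_spec ha j
  constructor
  · intro h
    have : i ≤ s₀ := by
      rw [Fin.le_def]; omega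
    rw [← hs₀]; exact hmono this
  · intro h
    rcases le_or_gt i s₀ with hle | hlt
    · rw [Fin.le_def] at hle; omega
    · have : n s₀ ≤ n i := hmono hlt.le
      have heq : n i = n j := le_antisymm h (hs₀ ▸ this)
      exact hub i heq
lemma key_b (hmono : Monotone n)
    (hb : ∀ r, b r = sInf {m : ℕ | ∃ s : Fin k, n s = n r ∧ m = (s : ℕ) + 1})
    (i j : Fin k) : b i ≤ (j : ℕ) + 1 ↔ n i ≤ n j := by
  obtain ⟨⟨t₀, ht₀, hbt⟩, hlb⟩ := b_spec hb i
  constructor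
  · intro h
    have : t₀ ≤ j := by rw [Fin.le_def]; omega
    rw [← ht₀]; exact hmono this
  · intro h
    rcases le_or_gt t₀ j with hle | hlt
    · rw [Fin.le_def] at hle; omega
    · have : n j ≤ n t₀ := hmono hlt.le
      have heq : n j = n i := le_antisymm (ht₀ ▸ this) h
      exact hlb j heq

lemma a_bounds (ha : ∀ r, a r = sSup {m : ℕ | ∃ s : Fin k, n s = n r ∧ m = (s : ℕ) + 1})
    (r : Fin k) : (r : ℕ) < a r ∧ a r ≤ k := by
  obtain ⟨⟨s₀, _, has⟩, hub⟩ := a_spec ha r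
  exact ⟨hub r rfl, by have := s₀.isLt; omega⟩

lemma b_bounds (hb : ∀ r, b r = sInf {m : ℕ | ∃ s : Fin k, n s = n r ∧ m = (s : ℕ) + 1})
    (r : Fin k) : 1 ≤ b r ∧ b r ≤ (r : ℕ) + 1 ∧ b r ≤ k := by
  obtain ⟨⟨t₀, _, hbt⟩, hlb⟩ := b_spec hb r
  refine ⟨by omega, hlb r rfl, by have := t₀.isLt; have := r.isLt; omega⟩

lemma cardA (hmono : Monotone n)
    (ha : ∀ r, a r = sSup {m : ℕ | ∃ s : Fin k, n s = n r ∧ m = (s : ℕ) + 1})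
    (j : Fin k) : (Finset.univ.filter fun i : Fin k => n j < n i).card = k - a j := by
  have : (Finset.univ.filter fun i : Fin k => n j < n i)
      = (Finset.univ.filter fun i : Fin k => a j ≤ (i : ℕ)) := by
    apply Finset.filter_congr
    intro i _
    rw [← not_le (a := n i) (b := n j), ← key_a hmono ha i j, not_lt]
  rw [this, card_fin_le]

lemma cardB (hmono : Monotone n)
    (hb : ∀ r, b r = sInf {m : ℕ | ∃ s : Fin k, n s = n r ∧ m = (s : ℕ) + 1})
    (i : Fin k) : (Finset.univ.filter fun j : Fin k => n i ≤ n j).card = k - b i + 1 := by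
  have h1 : (Finset.univ.filter fun j : Fin k => n i ≤ n j)
      = (Finset.univ.filter fun j : Fin k => b i - 1 ≤ (j : ℕ)) := by
    apply Finset.filter_congr
    intro j _
    rw [← key_b hmono hb i j]
    have := (b_bounds hb i).1
    omega
  rw [h1, card_fin_le]
  have h2 := b_bounds hb i
  omega

end
end AB

section Flag
variable {p : ℕ}

def Wsub (p k c : ℕ) : Submodule (ZMod p) (Fin k → ZMod p) where
  carrier := {x | ∀ i : Fin k, c ≤ (i : ℕ) → x i = 0}
  add_mem' := by
    intro x y hx hy i hi
    simp only [Pi.add_apply, hx i hi, hy i hi, add_zero]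
  zero_mem' := fun i _ => rfl
  smul_mem' := by
    intro r x hx i hi
    simp only [Pi.smul_apply, hx i hi, smul_zero]

lemma Wsub_mono {k c c' : ℕ} (h : c ≤ c') : Wsub p k c ≤ Wsub p k c' :=
  fun x hx i hi => hx i (h.trans hi)

lemma mem_Wsub {k c : ℕ} (x : Fin k → ZMod p) :
    x ∈ Wsub p k c ↔ ∀ i : Fin k, c ≤ (i : ℕ) → x i = 0 := Iff.rfl

lemma card_Wsub (hp : p.Prime) {k c : ℕ} (hc : c ≤ k) :
    Nat.card (Wsub p k c) = p ^ c := by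
  haveI := Fact.mk hp
  have e : Wsub p k c ≃ ({i : Fin k // (i : ℕ) < c} → ZMod p) := by
    refine ⟨fun x i => x.1 i.1, fun y => ⟨fun i => if h : (i : ℕ) < c then y ⟨i, h⟩ else 0,
      fun i hi => dif_neg (by omega)⟩, fun x => ?_, fun y => ?_⟩
    · apply Subtype.ext; funext i
      by_cases h : (i : ℕ) < c
      · simp only [dif_pos h]
      · simp only [dif_neg h]
        exact (x.2 i (by omega)).symm
    · funext i
      simp only [dif_pos i.2]
  have e2 : {i : Fin k // (i : ℕ) < c} ≃ Fin c := by
    refine ⟨fun i => ⟨i.1, i.2⟩, fun j => ⟨⟨j.1, by have := j.isLt; omega⟩, j.isLt⟩,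
      fun i => by apply Subtype.ext; apply Fin.ext; rfl, fun j => by apply Fin.ext; rfl⟩
  rw [Nat.card_congr e, Nat.card_pi]
  rw [Finset.prod_const, Nat.card_zmod, Finset.card_univ, Fintype.card_congr e2,
    Fintype.card_fin]

lemma flag_count (hp : p.Prime) {k : ℕ} (A : Fin k → ℕ) (hA1 : ∀ j : Fin k, (j : ℕ) < A j)
    (hA2 : ∀ j, A j ≤ k) (hAm : Monotone A) :
    ∀ (m : ℕ) (hm : m ≤ k),
    Nat.card {v : Fin m → (Fin k → ZMod p) // LinearIndependent (ZMod p) v ∧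
      ∀ j : Fin m, v j ∈ Wsub p k (A (Fin.castLE hm j))} =
    ∏ j : Fin m, (p ^ A (Fin.castLE hm j) - p ^ (j : ℕ)) := by
  haveI := Fact.mk hp
  intro m
  induction m with
  | zero =>
      intro hm
      have hall : ∀ v : Fin 0 → (Fin k → ZMod p),
          LinearIndependent (ZMod p) v ∧ ∀ j : Fin 0, v j ∈ Wsub p k (A (Fin.castLE hm j)) :=
        fun v => ⟨linearIndependent_empty_type, fun j => j.elim0⟩
      rw [Nat.card_congr (Equiv.subtypeUnivEquiv hall)]
      simp [Nat.card_pi]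
  | succ m ih =>
      intro hm
      have hm' : m ≤ k := (Nat.le_succ m).trans hm
      have hidx : ∀ j : Fin m, Fin.castLE hm (Fin.castSucc j) = Fin.castLE hm' j :=
        fun j => Fin.ext rfl
      set jm : Fin k := Fin.castLE hm (Fin.last m) with hjm
      set S := {u : Fin m → (Fin k → ZMod p) // LinearIndependent (ZMod p) u ∧
        ∀ j : Fin m, u j ∈ Wsub p k (A (Fin.castLE hm' j))} with hS
      have e : {v : Fin (m + 1) → (Fin k → ZMod p) // LinearIndependent (ZMod p) v ∧
          ∀ j : Fin (m + 1), v j ∈ Wsub p k (A (Fin.castLE hm j))} ≃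
          Σ u : S, {x : Fin k → ZMod p // x ∈ Wsub p k (A jm) ∧
            x ∉ Submodule.span (ZMod p) (Set.range (u.1))} := by
        refine ⟨fun v => ⟨⟨Fin.init v.1,
            ((linearIndependent_fin_snoc).mp
              (by rw [Fin.snoc_init_self]; exact v.2.1)).1,
            fun j => hidx j ▸ v.2.2 (Fin.castSucc j)⟩,
          ⟨v.1 (Fin.last m), v.2.2 (Fin.last m),
            ((linearIndependent_fin_snoc).mp
              (by rw [Fin.snoc_init_self]; exact v.2.1)).2⟩⟩,
          fun ux => ⟨Fin.snoc ux.1.1 ux.2.1,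
            linearIndependent_fin_snoc.2 ⟨ux.1.2.1, ux.2.2.2⟩, fun j => ?_⟩,
          fun v => Subtype.ext (Fin.snoc_init_self v.1), fun ux => ?_⟩
        · refine Fin.lastCases ?_ ?_ j
          · rw [Fin.snoc_last]; exact ux.2.2.1
          · intro j'
            rw [Fin.snoc_castSucc, hidx j']
            exact ux.1.2.2 j'
        · obtain ⟨⟨u, hu⟩, ⟨x, hx⟩⟩ := ux
          refine Sigma.ext ?_ ?_
          · exact Subtype.ext (by simp)
          · rw [Subtype.heq_iff_coe_eq]
            · simp
            · intro y
              simp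
      rw [Nat.card_congr e]
      letI : Fintype S := Fintype.ofFinite S
      letI : ∀ u : S, Fintype {x : Fin k → ZMod p // x ∈ Wsub p k (A jm) ∧
          x ∉ Submodule.span (ZMod p) (Set.range (u.1))} := fun u => Fintype.ofFinite _
      rw [Nat.card_eq_fintype_card, Fintype.card_sigma]
      have hfiber : ∀ u : S, Fintype.card {x : Fin k → ZMod p // x ∈ Wsub p k (A jm) ∧
          x ∉ Submodule.span (ZMod p) (Set.range (u.1))} = p ^ A jm - p ^ m := by
        intro u
        have hspan : Submodule.span (ZMod p) (Set.range (u.1)) ≤ Wsub p k (A jm) := by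
          rw [Submodule.span_le]
          rintro x ⟨j, rfl⟩
          refine Wsub_mono (hAm ?_) (u.2.2 j)
          rw [Fin.le_def, hjm]
          simp only [Fin.coe_castLE, Fin.val_last]
          exact j.isLt.le
        letI : Fintype {y : Wsub p k (A jm) //
            (y : Fin k → ZMod p) ∈ Submodule.span (ZMod p) (Set.range (u.1))} :=
          Fintype.ofFinite _
        letI : Fintype {y : Wsub p k (A jm) //
            (y : Fin k → ZMod p) ∉ Submodule.span (ZMod p) (Set.range (u.1))} :=
          Fintype.ofFinite _
        letI : Fintype (Wsub p k (A jm)) := Fintype.ofFinite _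
        letI : Fintype (Submodule.span (ZMod p) (Set.range (u.1))) := Fintype.ofFinite _
        have e1 : {x : Fin k → ZMod p // x ∈ Wsub p k (A jm) ∧
            x ∉ Submodule.span (ZMod p) (Set.range (u.1))} ≃
            {y : Wsub p k (A jm) //
              (y : Fin k → ZMod p) ∉ Submodule.span (ZMod p) (Set.range (u.1))} :=
          ⟨fun x => ⟨⟨x.1, x.2.1⟩, x.2.2⟩, fun y => ⟨y.1.1, y.1.2, y.2⟩,
            fun x => rfl, fun y => rfl⟩
        have e2 : {y : Wsub p k (A jm) //
            (y : Fin k → ZMod p) ∈ Submodule.span (ZMod p) (Set.range (u.1))} ≃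
            Submodule.span (ZMod p) (Set.range (u.1)) :=
          ⟨fun y => ⟨y.1.1, y.2⟩, fun s => ⟨⟨s.1, hspan s.2⟩, s.2⟩,
            fun y => rfl, fun s => rfl⟩
        have hcW : Fintype.card (Wsub p k (A jm)) = p ^ A jm := by
          rw [← Nat.card_eq_fintype_card, card_Wsub hp (hA2 jm)]
        have hcS : Fintype.card (Submodule.span (ZMod p) (Set.range (u.1))) = p ^ m := by
          rw [Module.card_eq_pow_finrank (K := ZMod p), ZMod.card]
          rw [finrank_span_eq_card u.2.1, Fintype.card_fin]
        rw [Fintype.card_congr e1, Fintype.card_subtype_compl, hcW,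
          Fintype.card_congr e2, hcS]
      rw [Finset.sum_congr rfl fun u _ => hfiber u, Finset.sum_const, smul_eq_mul,
        Finset.card_univ, ← Nat.card_eq_fintype_card (α := S)]
      have hcard : Nat.card S = ∏ j : Fin m, (p ^ A (Fin.castLE hm' j) - p ^ (j : ℕ)) := by
        rw [hS]; exact ih hm'
      rw [hcard, Fin.prod_univ_castSucc]
      congr 1

end Flag

section PatGL
variable {p k : ℕ} {n a : Fin k → ℕ}

lemma a_mono (hmono : Monotone n)
    (ha : ∀ r, a r = sSup {m : ℕ | ∃ s : Fin k, n s = n r ∧ m = (s : ℕ) + 1}) :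
    Monotone a := by
  intro i j hij
  obtain ⟨⟨s₀, hs₀, has⟩, _⟩ := a_spec ha i
  have h1 : n s₀ ≤ n j := hs₀.le.trans (hmono hij)
  have h2 := (key_a hmono ha s₀ j).2 h1
  omega

lemma card_pattern_GL (hp : p.Prime) (hmono : Monotone n)
    (ha : ∀ r, a r = sSup {m : ℕ | ∃ s : Fin k, n s = n r ∧ m = (s : ℕ) + 1}) :
    Nat.card {B : Matrix (Fin k) (Fin k) (ZMod p) //
        IsUnit B ∧ ∀ i j : Fin k, n j < n i → B i j = 0} =
      ∏ j : Fin k, (p ^ a j - p ^ (j : ℕ)) := by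
  haveI := Fact.mk hp
  have hcast : ∀ j : Fin k, Fin.castLE (le_refl k) j = j := fun j => Fin.ext rfl
  have hkey : ∀ i j : Fin k, a j ≤ (i : ℕ) ↔ n j < n i := by
    intro i j
    rw [← not_lt (a := (i : ℕ)), ← not_le (a := n i)]
    exact not_congr (key_a hmono ha i j)
  have e : {B : Matrix (Fin k) (Fin k) (ZMod p) //
      IsUnit B ∧ ∀ i j : Fin k, n j < n i → B i j = 0} ≃
      {v : Fin k → (Fin k → ZMod p) // LinearIndependent (ZMod p) v ∧
        ∀ j : Fin k, v j ∈ Wsub p k (a (Fin.castLE (le_refl k) j))} := by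
    refine ⟨fun B => ⟨fun j i => B.1 i j, ?_, ?_⟩,
      fun v => ⟨Matrix.of fun i j => v.1 j i, ?_, ?_⟩, fun B => rfl, fun v => rfl⟩
    · exact Matrix.linearIndependent_cols_iff_isUnit.2 B.2.1
    · intro j
      rw [hcast, mem_Wsub]
      intro i hi
      exact B.2.2 i j ((hkey i j).1 hi)
    · exact Matrix.linearIndependent_cols_iff_isUnit.1 v.2.1
    · intro i j hij
      have := v.2.2 j
      rw [hcast, mem_Wsub] at this
      exact this i ((hkey i j).2 hij)
  rw [Nat.card_congr e,
    flag_count hp a (fun j => (a_bounds ha j).1) (fun j => (a_bounds ha j).2)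
      (a_mono hmono ha) k (le_refl k)]
  exact Finset.prod_congr rfl fun j _ => by rw [hcast]

end PatGL

section Fibers
variable {p k : ℕ} {n : Fin k → ℕ}

/-- reduction matrix of torsion data -/
def Rmat (p : ℕ) (n : Fin k → ℕ)
    (d : ∀ j i : Fin k, {z : ZMod (p ^ n i) // p ^ n j • z = 0}) :
    Matrix (Fin k) (Fin k) (ZMod p) :=
  Matrix.of fun i j => ((((d j i) : ZMod (p ^ n i)).val : ℕ) : ZMod p)

lemma small_card (hp : p.Prime) (hpos : ∀ i, 1 ≤ n i) (i j : Fin k) (c : ZMod p) :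
    Nat.card {z : {z : ZMod (p ^ n i) // p ^ n j • z = 0} // (((z : ZMod (p ^ n i)).val : ℕ) : ZMod p) = c}
      = if n i ≤ n j then p ^ (n i - 1) else if c = 0 then p ^ n j else 0 := by
  haveI : NeZero (p ^ n i) := ⟨pow_ne_zero _ hp.ne_zero⟩
  rcases le_or_gt (n i) (n j) with hle | hlt
  · rw [if_pos hle]
    have hall : ∀ z : ZMod (p ^ n i), p ^ n j • z = 0 := by
      intro z
      rw [nsmul_eq_mul, show ((p ^ n j : ℕ) : ZMod (p ^ n i)) = 0 from
        (ZMod.natCast_eq_zero_iff _ _).2 (pow_dvd_pow p hle), zero_mul]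
    have e : {z : {z : ZMod (p ^ n i) // p ^ n j • z = 0} //
        (((z : ZMod (p ^ n i)).val : ℕ) : ZMod p) = c} ≃
        {z : ZMod (p ^ n i) // ((z.val : ℕ) : ZMod p) = c} :=
      ⟨fun z => ⟨z.1.1, z.2⟩, fun z => ⟨⟨z.1, hall z.1⟩, z.2⟩, fun z => rfl, fun z => rfl⟩
    rw [Nat.card_congr e, card_fiber_red hp (n i) (hpos i) c]
  · rw [if_neg (not_le.2 hlt)]
    have hzero : ∀ z : {z : ZMod (p ^ n i) // p ^ n j • z = 0},
        (((z : ZMod (p ^ n i)).val : ℕ) : ZMod p) = 0 :=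
      fun z => torsion_red_zero hp (n i) (n j) hlt z.1 z.2
    rcases eq_or_ne c 0 with rfl | hc
    · rw [if_pos rfl]
      have e : {z : {z : ZMod (p ^ n i) // p ^ n j • z = 0} //
          (((z : ZMod (p ^ n i)).val : ℕ) : ZMod p) = 0} ≃
          {z : ZMod (p ^ n i) // p ^ n j • z = 0} :=
        Equiv.subtypeUnivEquiv hzero
      rw [Nat.card_congr e, card_torsion hp (n i) (n j) hlt.le]
    · rw [if_neg hc]
      haveI : IsEmpty {z : {z : ZMod (p ^ n i) // p ^ n j • z = 0} //
          (((z : ZMod (p ^ n i)).val : ℕ) : ZMod p) = c} :=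
        ⟨fun z => hc (z.2 ▸ (hzero z.1).symm ▸ rfl)⟩
      exact Nat.card_of_isEmpty

open Classical in
lemma fiber_card (hp : p.Prime) (hpos : ∀ i, 1 ≤ n i) (B : Matrix (Fin k) (Fin k) (ZMod p)) :
    Nat.card {d : ∀ j i : Fin k, {z : ZMod (p ^ n i) // p ^ n j • z = 0} // Rmat p n d = B}
      = if ∀ i j : Fin k, n j < n i → B i j = 0 then
          ∏ i : Fin k, ∏ j : Fin k, (if n i ≤ n j then p ^ (n i - 1) else p ^ n j)
        else 0 := by
  have e : {d : ∀ j i : Fin k, {z : ZMod (p ^ n i) // p ^ n j • z = 0} // Rmat p n d = B} ≃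
      ∀ j i : Fin k, {z : {z : ZMod (p ^ n i) // p ^ n j • z = 0} //
        (((z : ZMod (p ^ n i)).val : ℕ) : ZMod p) = B i j} := by
    refine ⟨fun d j i => ⟨d.1 j i, ?_⟩, fun f => ⟨fun j i => (f j i).1, ?_⟩,
      fun d => rfl, fun f => rfl⟩
    · have := d.2
      exact congrFun (congrFun (congrArg (fun M : Matrix (Fin k) (Fin k) (ZMod p) => M) this) i) j
    · funext i j
      exact (f j i).2
  rw [Nat.card_congr e, Nat.card_pi]
  have hin : ∀ j : Fin k, Nat.card (∀ i : Fin k, {z : {z : ZMod (p ^ n i) // p ^ n j • z = 0} //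
      (((z : ZMod (p ^ n i)).val : ℕ) : ZMod p) = B i j}) =
      ∏ i : Fin k, (if n i ≤ n j then p ^ (n i - 1) else if B i j = 0 then p ^ n j else 0) := by
    intro j
    rw [Nat.card_pi]
    exact Finset.prod_congr rfl fun i _ => small_card hp hpos i j (B i j)
  rw [Finset.prod_congr rfl fun j _ => hin j]
  by_cases hB : ∀ i j : Fin k, n j < n i → B i j = 0
  · rw [if_pos hB, Finset.prod_comm]
    refine Finset.prod_congr rfl fun i _ => Finset.prod_congr rfl fun j _ => ?_
    rcases le_or_gt (n i) (n j) with hle | hlt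
    · rw [if_pos hle, if_pos hle]
    · rw [if_neg (not_le.2 hlt), if_neg (not_le.2 hlt), if_pos (hB i j hlt)]
  · rw [if_neg hB]
    push_neg at hB
    obtain ⟨i, j, hlt, hne⟩ := hB
    apply Finset.prod_eq_zero (Finset.mem_univ j)
    apply Finset.prod_eq_zero (Finset.mem_univ i)
    rw [if_neg (not_le.2 hlt), if_neg hne]

end Fibers

section Count
variable {p k : ℕ} {n : Fin k → ℕ}

lemma count_D (hp : p.Prime) (hpos : ∀ i, 1 ≤ n i) :
    Nat.card {d : ∀ j i : Fin k, {z : ZMod (p ^ n i) // p ^ n j • z = 0} //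
        IsUnit (Rmat p n d)} =
      Nat.card {B : Matrix (Fin k) (Fin k) (ZMod p) //
          IsUnit B ∧ ∀ i j : Fin k, n j < n i → B i j = 0} *
        ∏ i : Fin k, ∏ j : Fin k, (if n i ≤ n j then p ^ (n i - 1) else p ^ n j) := by
  classical
  haveI : NeZero p := ⟨hp.ne_zero⟩
  haveI : ∀ i : Fin k, NeZero (p ^ n i) := fun i => ⟨pow_ne_zero _ hp.ne_zero⟩
  set C := ∏ i : Fin k, ∏ j : Fin k, (if n i ≤ n j then p ^ (n i - 1) else p ^ n j) with hCdef
  have e : {d : ∀ j i : Fin k, {z : ZMod (p ^ n i) // p ^ n j • z = 0} //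
      IsUnit (Rmat p n d)} ≃
      Σ B : {B : Matrix (Fin k) (Fin k) (ZMod p) // IsUnit B},
        {d : ∀ j i : Fin k, {z : ZMod (p ^ n i) // p ^ n j • z = 0} // Rmat p n d = B.1} := by
    refine ⟨fun d => ⟨⟨Rmat p n d.1, d.2⟩, ⟨d.1, rfl⟩⟩,
      fun x => ⟨x.2.1, by rw [x.2.2]; exact x.1.2⟩, fun d => rfl, fun x => ?_⟩
    obtain ⟨⟨B, hB⟩, ⟨d, hd⟩⟩ := x
    replace hd : Rmat p n d = B := hd
    subst hd
    rfl
  rw [Nat.card_congr e]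
  letI : Fintype {B : Matrix (Fin k) (Fin k) (ZMod p) // IsUnit B} := Fintype.ofFinite _
  letI : ∀ B : {B : Matrix (Fin k) (Fin k) (ZMod p) // IsUnit B},
      Fintype {d : ∀ j i : Fin k, {z : ZMod (p ^ n i) // p ^ n j • z = 0} //
        Rmat p n d = B.1} := fun B => Fintype.ofFinite _
  rw [Nat.card_eq_fintype_card, Fintype.card_sigma]
  have hterm : ∀ B : {B : Matrix (Fin k) (Fin k) (ZMod p) // IsUnit B},
      Fintype.card {d : ∀ j i : Fin k, {z : ZMod (p ^ n i) // p ^ n j • z = 0} //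
        Rmat p n d = B.1}
      = if (∀ i j : Fin k, n j < n i → B.1 i j = 0) then C else 0 := by
    intro B
    rw [← Nat.card_eq_fintype_card, fiber_card hp hpos B.1, hCdef]
  rw [Finset.sum_congr rfl fun B _ => hterm B, Finset.sum_ite, Finset.sum_const,
    Finset.sum_const_zero, add_zero, smul_eq_mul]
  congr 1
  rw [← Fintype.card_subtype]
  have e2 : {x : {B : Matrix (Fin k) (Fin k) (ZMod p) // IsUnit B} //
      ∀ i j : Fin k, n j < n i → x.1 i j = 0} ≃
      {B : Matrix (Fin k) (Fin k) (ZMod p) //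
        IsUnit B ∧ ∀ i j : Fin k, n j < n i → B i j = 0} :=
    ⟨fun x => ⟨x.1.1, x.1.2, x.2⟩, fun B => ⟨⟨B.1, B.2.1⟩, B.2.2⟩,
      fun x => rfl, fun B => rfl⟩
  rw [Fintype.card_congr e2, Nat.card_eq_fintype_card]

end Count

section Final
variable {p k : ℕ} {n a b : Fin k → ℕ}

lemma C_eq (hmono : Monotone n)
    (ha : ∀ r, a r = sSup {m : ℕ | ∃ s : Fin k, n s = n r ∧ m = (s : ℕ) + 1})
    (hb : ∀ r, b r = sInf {m : ℕ | ∃ s : Fin k, n s = n r ∧ m = (s : ℕ) + 1}) :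
    (∏ i : Fin k, ∏ j : Fin k, (if n i ≤ n j then p ^ (n i - 1) else p ^ n j))
      = (∏ u : Fin k, p ^ (n u * (k - a u))) * ∏ v : Fin k, p ^ ((n v - 1) * (k - b v + 1)) := by
  classical
  have hsplit : ∀ i j : Fin k, (if n i ≤ n j then p ^ (n i - 1) else p ^ n j)
      = (if n i ≤ n j then p ^ (n i - 1) else 1) * (if n j < n i then p ^ n j else 1) := by
    intro i j
    rcases le_or_gt (n i) (n j) with h | h
    · rw [if_pos h, if_pos h, if_neg (not_lt.2 h), mul_one]
    · rw [if_neg (not_le.2 h), if_neg (not_le.2 h), if_pos h, one_mul]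
  have h0 : (∏ i : Fin k, ∏ j : Fin k, (if n i ≤ n j then p ^ (n i - 1) else p ^ n j))
      = (∏ i : Fin k, ∏ j : Fin k, (if n i ≤ n j then p ^ (n i - 1) else 1)) *
        ∏ i : Fin k, ∏ j : Fin k, (if n j < n i then p ^ n j else 1) := by
    rw [← Finset.prod_mul_distrib]
    refine Finset.prod_congr rfl fun i _ => ?_
    rw [← Finset.prod_mul_distrib]
    exact Finset.prod_congr rfl fun j _ => hsplit i j
  have h1 : ∀ i : Fin k, (∏ j : Fin k, if n i ≤ n j then p ^ (n i - 1) else 1)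
      = p ^ ((n i - 1) * (k - b i + 1)) := by
    intro i
    rw [← Finset.prod_filter, Finset.prod_const, cardB hmono hb i, ← pow_mul]
  have h2 : (∏ i : Fin k, ∏ j : Fin k, if n j < n i then p ^ n j else 1)
      = ∏ j : Fin k, p ^ (n j * (k - a j)) := by
    rw [Finset.prod_comm]
    refine Finset.prod_congr rfl fun j _ => ?_
    rw [← Finset.prod_filter, Finset.prod_const, cardA hmono ha j, ← pow_mul]
  rw [h0, Finset.prod_congr rfl fun i _ => h1 i, h2, mul_comm]

end Final

/-- Let `p` be a prime and `G ≅ ∏_{i=1}^{k} ℤ_{p^{n_i}}` a finite abelian `p`-group,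
where `1 ≤ n₁ ≤ ... ≤ n_k`. With `a_r = max{s | n_s = n_r}` and `b_r = min{s | n_s = n_r}`
(indices taken in `{1, ..., k}`), we have
`|Aut(G)| = ∏_i (p^{a_i} − p^{i−1}) · ∏_u p^{n_u(k − a_u)} · ∏_v p^{(n_v−1)(k − b_v + 1)}`.
Here `Fin k` models the index set, with `i : Fin k` corresponding to the index `i + 1`. -/
theorem stmt_12 (p : ℕ) (hp : p.Prime) (k : ℕ) (hk : 0 < k) (n : Fin k → ℕ)
    (hmono : Monotone n) (hpos : ∀ i, 1 ≤ n i) (a b : Fin k → ℕ)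
    (ha : ∀ r, a r = sSup {m : ℕ | ∃ s : Fin k, n s = n r ∧ m = (s : ℕ) + 1})
    (hb : ∀ r, b r = sInf {m : ℕ | ∃ s : Fin k, n s = n r ∧ m = (s : ℕ) + 1}) :
    Nat.card (AddAut (∀ i : Fin k, ZMod (p ^ n i))) =
      (∏ i : Fin k, (p ^ a i - p ^ (i : ℕ))) *
      (∏ u : Fin k, p ^ (n u * (k - a u))) *
      (∏ v : Fin k, p ^ ((n v - 1) * (k - b v + 1))) := by
  haveI := Fact.mk hp
  haveI : NeZero p := ⟨hp.ne_zero⟩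
  haveI : ∀ i : Fin k, NeZero (p ^ n i) := fun i => ⟨pow_ne_zero _ hp.ne_zero⟩
  have e1 : AddAut (∀ i : Fin k, ZMod (p ^ n i)) ≃
      {φ : (∀ i : Fin k, ZMod (p ^ n i)) →+ (∀ i : Fin k, ZMod (p ^ n i)) //
        Function.Bijective φ} := by
    refine ⟨fun e => ⟨e.toAddMonoidHom, e.bijective⟩,
      fun φ => AddEquiv.ofBijective φ.1 φ.2, fun e => ?_, fun φ => ?_⟩
    · apply AddEquiv.ext; intro x; rfl
    · apply Subtype.ext; apply AddMonoidHom.ext; intro x; rfl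
  have e2 : {φ : (∀ i : Fin k, ZMod (p ^ n i)) →+ (∀ i : Fin k, ZMod (p ^ n i)) //
      Function.Bijective φ} ≃
      {φ : (∀ i : Fin k, ZMod (p ^ n i)) →+ (∀ i : Fin k, ZMod (p ^ n i)) //
        Function.Surjective φ} :=
    Equiv.subtypeEquivRight (fun φ =>
      ⟨fun h => h.2, fun h => ⟨Finite.injective_iff_surjective.2 h, h⟩⟩)
  have e3 : {d : ∀ j i : Fin k, {z : ZMod (p ^ n i) // p ^ n j • z = 0} //
      IsUnit (Rmat p n d)} ≃
      {φ : (∀ i : Fin k, ZMod (p ^ n i)) →+ (∀ i : Fin k, ZMod (p ^ n i)) //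
        Function.Surjective φ} :=
    (Equiv.ofBijective (endOf p n hp) (endOf_bijective hp hpos)).subtypeEquiv (fun d => by
      have hmat : matOf p n hpos (endOf p n hp d) = Rmat p n d := by
        funext i j
        exact matOf_endOf hp hpos d i j
      rw [← hmat]
      exact (surjective_iff_isUnit_matOf hp hpos (endOf p n hp d)).symm)
  rw [Nat.card_congr ((e1.trans e2).trans e3.symm), count_D hp hpos,
    card_pattern_GL hp hmono ha, C_eq hmono ha hb]
  ring
end

section
/- Let p be a prime and let 1 ≤ n₁ ≤ n₂ be positive integers. Then |Aut(Z_{p^{n₁}} × Z_{p^{n₂}})| = (p−1)² · (p+1)^{⌊n₁/n₂⌋} · p^{3n₁ + n₂ − ⌊n₁/n₂⌋ − 2}, where ⌊n₁/n₂⌋ is the integer part of n₁/n₂ (which equals 1 if n₁ = n₂ and 0 otherwise). -/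
open Function

private lemma nsmul_mod' {G : Type*} [AddCommMonoid G] {k : ℕ} {x : G} (hk : k • x = 0)
    (m : ℕ) : m • x = (m % k) • x := by
  conv_lhs => rw [← Nat.mod_add_div m k]
  rw [add_nsmul, mul_comm, ← smul_smul, hk, smul_zero, add_zero]

section Main

variable (p a b : ℕ)

/-- The endomorphism of `ZMod (p^a) × ZMod (p^b)` sending `(1,0) ↦ x`, `(0,1) ↦ y`. -/
def phi [NeZero (p ^ a)] [NeZero (p ^ b)]
    (x y : ZMod (p ^ a) × ZMod (p ^ b)) (hx : p ^ a • x = 0) (hy : p ^ b • y = 0) :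
    (ZMod (p ^ a) × ZMod (p ^ b)) →+ (ZMod (p ^ a) × ZMod (p ^ b)) where
  toFun z := z.1.val • x + z.2.val • y
  map_zero' := by simp
  map_add' z w := by
    have h1 : (z.1 + w.1).val • x = z.1.val • x + w.1.val • x := by
      rw [ZMod.val_add, ← nsmul_mod' hx, add_nsmul]
    have h2 : (z.2 + w.2).val • y = z.2.val • y + w.2.val • y := by
      rw [ZMod.val_add, ← nsmul_mod' hy, add_nsmul]
    show (z + w).1.val • x + (z + w).2.val • y = _
    rw [Prod.fst_add, Prod.snd_add, h1, h2]
    abel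

lemma phi_apply [NeZero (p ^ a)] [NeZero (p ^ b)]
    (x y : ZMod (p ^ a) × ZMod (p ^ b)) (hx : p ^ a • x = 0) (hy : p ^ b • y = 0)
    (z : ZMod (p ^ a) × ZMod (p ^ b)) :
    phi p a b x y hx hy z = z.1.val • x + z.2.val • y := rfl

lemma smul_top [NeZero (p ^ a)] (hab : a ≤ b) (z : ZMod (p ^ a) × ZMod (p ^ b)) :
    p ^ b • z = 0 := by
  have h1 : p ^ b • z.1 = 0 := by
    have h : ((p ^ b : ℕ) : ZMod (p ^ a)) = 0 :=
      (ZMod.natCast_eq_zero_iff _ _).mpr (pow_dvd_pow p hab)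
    rw [nsmul_eq_mul, h, zero_mul]
  have h2 : p ^ b • z.2 = 0 := by
    have h : ((p ^ b : ℕ) : ZMod (p ^ b)) = 0 := ZMod.natCast_self _
    rw [nsmul_eq_mul, h, zero_mul]
  rw [Prod.ext_iff]
  exact ⟨h1, h2⟩

lemma smul_e1 [NeZero (p ^ a)] :
    p ^ a • (((1 : ZMod (p ^ a)), (0 : ZMod (p ^ b)))) = 0 := by
  rw [Prod.ext_iff]
  constructor
  · show p ^ a • (1 : ZMod (p ^ a)) = 0
    rw [nsmul_eq_mul, mul_one, Nat.cast_pow, ← Nat.cast_pow, ZMod.natCast_self]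
  · show p ^ a • (0 : ZMod (p ^ b)) = 0
    exact smul_zero _

lemma decomp [NeZero (p ^ a)] [NeZero (p ^ b)] (z : ZMod (p ^ a) × ZMod (p ^ b)) :
    z = z.1.val • ((1 : ZMod (p ^ a)), (0 : ZMod (p ^ b)))
      + z.2.val • ((0 : ZMod (p ^ a)), (1 : ZMod (p ^ b))) := by
  rw [Prod.ext_iff]
  constructor
  · show z.1 = z.1.val • (1 : ZMod (p ^ a)) + z.2.val • (0 : ZMod (p ^ a))
    simp [nsmul_eq_mul, ZMod.natCast_val, ZMod.cast_id]
  · show z.2 = z.1.val • (0 : ZMod (p ^ b)) + z.2.val • (1 : ZMod (p ^ b))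
    simp [nsmul_eq_mul, ZMod.natCast_val, ZMod.cast_id]

/-- Endomorphisms correspond to pairs `(x, y)` with `p^a • x = 0`. -/
noncomputable def endEquiv [NeZero (p ^ a)] [NeZero (p ^ b)] (hab : a ≤ b)
    (h1a : 1 < p ^ a) (h1b : 1 < p ^ b) :
    {xy : (ZMod (p ^ a) × ZMod (p ^ b)) × (ZMod (p ^ a) × ZMod (p ^ b)) // p ^ a • xy.1 = 0} ≃
      ((ZMod (p ^ a) × ZMod (p ^ b)) →+ (ZMod (p ^ a) × ZMod (p ^ b))) where
  toFun s := phi p a b s.1.1 s.1.2 s.2 (smul_top p a b hab s.1.2)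
  invFun f := ⟨(f (1, 0), f (0, 1)), by
    show p ^ a • f (1, 0) = 0
    rw [← map_nsmul, smul_e1, map_zero]⟩
  left_inv s := by
    haveI : Fact (1 < p ^ a) := ⟨h1a⟩
    haveI : Fact (1 < p ^ b) := ⟨h1b⟩
    apply Subtype.ext
    rw [Prod.ext_iff]
    constructor
    · show phi p a b s.1.1 s.1.2 _ _ (1, 0) = s.1.1
      rw [phi_apply]
      show (1 : ZMod (p ^ a)).val • s.1.1 + (0 : ZMod (p ^ b)).val • s.1.2 = s.1.1
      rw [ZMod.val_one, ZMod.val_zero, one_smul, zero_smul, add_zero]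
    · show phi p a b s.1.1 s.1.2 _ _ (0, 1) = s.1.2
      rw [phi_apply]
      show (0 : ZMod (p ^ a)).val • s.1.1 + (1 : ZMod (p ^ b)).val • s.1.2 = s.1.2
      rw [ZMod.val_one, ZMod.val_zero, one_smul, zero_smul, zero_add]
  right_inv f := by
    refine DFunLike.ext _ _ fun z => ?_
    show phi p a b (f (1, 0)) (f (0, 1)) _ _ z = f z
    rw [phi_apply, ← map_nsmul, ← map_nsmul, ← map_add, ← decomp]

/-- Reduction mod p. -/
def red (ha : a ≠ 0) (hb : b ≠ 0) :
    (ZMod (p ^ a) × ZMod (p ^ b)) →+ ZMod p × ZMod p :=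
  AddMonoidHom.prodMap (ZMod.castHom (dvd_pow_self p ha) (ZMod p)).toAddMonoidHom
    (ZMod.castHom (dvd_pow_self p hb) (ZMod p)).toAddMonoidHom

lemma red_apply [NeZero (p ^ a)] [NeZero (p ^ b)] (ha : a ≠ 0) (hb : b ≠ 0)
    (z : ZMod (p ^ a) × ZMod (p ^ b)) :
    red p a b ha hb z = (((z.1.val : ZMod p), (z.2.val : ZMod p))) := by
  show ((ZMod.castHom (dvd_pow_self p ha) (ZMod p)) z.1,
      (ZMod.castHom (dvd_pow_self p hb) (ZMod p)) z.2) = _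
  rw [ZMod.castHom_apply, ZMod.castHom_apply, ZMod.natCast_val, ZMod.natCast_val]

lemma red_surj [NeZero p] [NeZero (p ^ a)] [NeZero (p ^ b)] (ha : a ≠ 0) (hb : b ≠ 0) :
    Surjective (red p a b ha hb) := by
  intro v
  refine ⟨((v.1.val : ZMod (p ^ a)), (v.2.val : ZMod (p ^ b))), ?_⟩
  rw [red_apply, Prod.ext_iff]
  constructor
  · show (((v.1.val : ZMod (p ^ a)).val : ZMod p)) = v.1
    rw [ZMod.val_cast_of_lt (lt_of_lt_of_le (ZMod.val_lt _) (Nat.le_self_pow ha p))]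
    exact ZMod.natCast_rightInverse v.1
  · show (((v.2.val : ZMod (p ^ b)).val : ZMod p)) = v.2
    rw [ZMod.val_cast_of_lt (lt_of_lt_of_le (ZMod.val_lt _) (Nat.le_self_pow hb p))]
    exact ZMod.natCast_rightInverse v.2

lemma red_zero_psmul [NeZero p] [NeZero (p ^ a)] [NeZero (p ^ b)] (ha : a ≠ 0) (hb : b ≠ 0)
    (z : ZMod (p ^ a) × ZMod (p ^ b)) (h : red p a b ha hb z = 0) :
    ∃ w, p • w = z := by
  rw [red_apply, Prod.ext_iff] at h
  obtain ⟨h1, h2⟩ := h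
  obtain ⟨m₁, hm₁⟩ := (ZMod.natCast_eq_zero_iff _ _).mp h1
  obtain ⟨m₂, hm₂⟩ := (ZMod.natCast_eq_zero_iff _ _).mp h2
  refine ⟨((m₁ : ZMod (p ^ a)), (m₂ : ZMod (p ^ b))), ?_⟩
  rw [Prod.ext_iff]
  constructor
  · show p • (m₁ : ZMod (p ^ a)) = z.1
    rw [nsmul_eq_mul, ← Nat.cast_mul, ← hm₁]
    exact ZMod.natCast_rightInverse z.1
  · show p • (m₂ : ZMod (p ^ b)) = z.2
    rw [nsmul_eq_mul, ← Nat.cast_mul, ← hm₂]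
    exact ZMod.natCast_rightInverse z.2

lemma g_surj_iff {F : Type*} [Field F] [DecidableEq F] (w₁ w₂ : F × F) :
    Surjective (fun v : F × F => v.1 • w₁ + v.2 • w₂) ↔
      w₁.1 * w₂.2 - w₂.1 * w₁.2 ≠ 0 := by
  have key : (fun v : F × F => v.1 • w₁ + v.2 • w₂) =
      (finTwoArrowEquiv F) ∘ (!![w₁.1, w₂.1; w₁.2, w₂.2]).mulVec ∘ (finTwoArrowEquiv F).symm := by
    funext v
    show _ = (finTwoArrowEquiv F) ((!![w₁.1, w₂.1; w₁.2, w₂.2]).mulVec ![v.1, v.2])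
    rw [Prod.ext_iff]
    constructor <;>
    · simp [finTwoArrowEquiv, Matrix.mulVec, dotProduct, Fin.sum_univ_two]
      try ring
  rw [key, EquivLike.comp_surjective, EquivLike.surjective_comp,
    Matrix.mulVec_surjective_iff_isUnit, Matrix.isUnit_iff_isUnit_det,
    Matrix.det_fin_two_of, isUnit_iff_ne_zero]

/-- The key criterion: an endomorphism is surjective iff its reduction mod `p` is invertible. -/
lemma surj_iff_det (hp : p.Prime) (ha : 1 ≤ a) (hab : a ≤ b)
    (f : (ZMod (p ^ a) × ZMod (p ^ b)) →+ (ZMod (p ^ a) × ZMod (p ^ b))) :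
    Surjective f ↔
      (((f (1, 0)).1.val : ZMod p) * ((f (0, 1)).2.val : ZMod p)
        - ((f (0, 1)).1.val : ZMod p) * ((f (1, 0)).2.val : ZMod p)) ≠ 0 := by
  haveI : Fact p.Prime := ⟨hp⟩
  haveI : NeZero (p ^ a) := ⟨pow_ne_zero _ hp.ne_zero⟩
  haveI : NeZero (p ^ b) := ⟨pow_ne_zero _ hp.ne_zero⟩
  have ha' : a ≠ 0 := by omega
  have hb' : b ≠ 0 := by omega
  set r := red p a b ha' hb' with hr
  set w₁ := r (f (1, 0)) with hw₁
  set w₂ := r (f (0, 1)) with hw₂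
  have hw₁' : w₁ = (((f (1, 0)).1.val : ZMod p), ((f (1, 0)).2.val : ZMod p)) :=
    red_apply p a b ha' hb' _
  have hw₂' : w₂ = (((f (0, 1)).1.val : ZMod p), ((f (0, 1)).2.val : ZMod p)) :=
    red_apply p a b ha' hb' _
  have hcomm : ∀ z, r (f z) = (r z).1 • w₁ + (r z).2 • w₂ := by
    intro z
    have hz : f z = z.1.val • f (1, 0) + z.2.val • f (0, 1) := by
      rw [← map_nsmul, ← map_nsmul, ← map_add, ← decomp]
    rw [hz, map_add, map_nsmul, map_nsmul, red_apply p a b ha' hb' z]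
    show _ = ((z.1.val : ZMod p)) • w₁ + ((z.2.val : ZMod p)) • w₂
    rw [Nat.cast_smul_eq_nsmul, Nat.cast_smul_eq_nsmul]
  have hgoal : (w₁.1 * w₂.2 - w₂.1 * w₁.2 ≠ 0) ↔
      (((f (1, 0)).1.val : ZMod p) * ((f (0, 1)).2.val : ZMod p)
        - ((f (0, 1)).1.val : ZMod p) * ((f (1, 0)).2.val : ZMod p)) ≠ 0 := by
    rw [hw₁', hw₂']
  rw [← hgoal, ← g_surj_iff]
  constructor
  · -- f surjective → reduced map surjective
    intro hf v
    obtain ⟨z', hz'⟩ := red_surj p a b ha' hb' v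
    obtain ⟨z, rfl⟩ := hf z'
    refine ⟨r z, ?_⟩
    show (r z).1 • w₁ + (r z).2 • w₂ = v
    rw [← hcomm]
    exact hz'
  · -- reduced map surjective → f surjective
    intro hg
    let μ : ℕ → ((ZMod (p ^ a) × ZMod (p ^ b)) →+ (ZMod (p ^ a) × ZMod (p ^ b))) := fun k =>
      { toFun := fun z => p ^ k • z
        map_zero' := smul_zero _
        map_add' := fun _ _ => smul_add _ _ _ }
    have hμ : ∀ k z, μ k z = p ^ k • z := fun _ _ => rfl
    have H1 : ∀ z, z ∈ f.range ⊔ (μ 1).range := by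
      intro z
      obtain ⟨v, hv⟩ := hg (r z)
      set z' := f (v.1.val • (1, 0) + v.2.val • (0, 1)) with hz'def
      have hz'r : r z' = r z := by
        rw [hz'def, map_add, map_nsmul, map_nsmul, map_add, map_nsmul, map_nsmul, ← hw₁, ← hw₂]
        rw [← Nat.cast_smul_eq_nsmul (ZMod p) v.1.val w₁,
          ← Nat.cast_smul_eq_nsmul (ZMod p) v.2.val w₂,
          ZMod.natCast_rightInverse v.1, ZMod.natCast_rightInverse v.2]
        exact hv
      have hsub : r (z - z') = 0 := by rw [map_sub, hz'r, sub_self]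
      obtain ⟨w, hw⟩ := red_zero_psmul p a b ha' hb' _ hsub
      refine AddSubgroup.mem_sup.mpr ⟨z', ⟨_, rfl⟩, z - z', ⟨w, ?_⟩, by abel⟩
      rw [hμ, pow_one, hw]
    have Hk : ∀ k, f.range ⊔ (μ k).range = ⊤ := by
      intro k
      induction k with
      | zero =>
        have h0 : (μ 0).range = ⊤ :=
          AddMonoidHom.range_eq_top.mpr fun z => ⟨z, by rw [hμ, pow_zero, one_smul]⟩
        rw [h0, sup_top_eq]
      | succ k ih =>
        rw [eq_top_iff]
        rintro z -
        have hz : z ∈ f.range ⊔ (μ k).range := ih ▸ AddSubgroup.mem_top z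
        rw [AddSubgroup.mem_sup] at hz
        obtain ⟨u, hu, t, ht, rfl⟩ := hz
        obtain ⟨y, rfl⟩ := ht
        have hy := H1 y
        rw [AddSubgroup.mem_sup] at hy
        obtain ⟨u', hu', s, hs, hy⟩ := hy
        obtain ⟨c, rfl⟩ := hu'
        obtain ⟨w, rfl⟩ := hs
        have hkey : μ k y = f (p ^ k • c) + p ^ (k + 1) • w := by
          rw [hμ, ← hy, map_nsmul, smul_add, hμ, pow_one, smul_smul, ← pow_succ]
        refine AddSubgroup.mem_sup.mpr
          ⟨u + f (p ^ k • c), add_mem hu ⟨p ^ k • c, rfl⟩, p ^ (k + 1) • w, ⟨w, rfl⟩, ?_⟩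
        rw [hkey]
        abel
    have hb0 : (μ b).range ≤ f.range := by
      rintro x ⟨y, rfl⟩
      rw [hμ, smul_top p a b hab]
      exact zero_mem _
    have : f.range = ⊤ := by
      rw [← Hk b, sup_of_le_left hb0]
    exact AddMonoidHom.range_eq_top.mp this

end Main

section Counting

/-- Counting elements of `ZMod (d*m)` whose `val` is divisible by `d`. -/
lemma card_dvd_val (d m : ℕ) (hd : 0 < d) (hm : 0 < m) :
    Nat.card {x : ZMod (d * m) // d ∣ x.val} = m := by
  haveI : NeZero (d * m) := ⟨by positivity⟩
  have e : {x : ZMod (d * m) // d ∣ x.val} ≃ Fin m :=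
    { toFun := fun x => ⟨x.1.val / d, Nat.div_lt_of_lt_mul (ZMod.val_lt x.1)⟩
      invFun := fun k => ⟨((d * (k : ℕ) : ℕ) : ZMod (d * m)), by
        rw [ZMod.val_natCast,
          Nat.mod_eq_of_lt (Nat.mul_lt_mul_of_le_of_lt (le_refl d) k.2 hd)]
        exact dvd_mul_right d _⟩
      left_inv := fun x => Subtype.ext (by
        show ((d * (x.1.val / d) : ℕ) : ZMod (d * m)) = x.1
        rw [Nat.mul_div_cancel' x.2]
        exact ZMod.natCast_rightInverse x.1)
      right_inv := fun k => Fin.ext (by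
        have hlt : d * (k : ℕ) < d * m := Nat.mul_lt_mul_of_le_of_lt (le_refl d) k.2 hd
        show (((d * (k : ℕ) : ℕ) : ZMod (d * m))).val / d = (k : ℕ)
        rw [ZMod.val_natCast, Nat.mod_eq_of_lt hlt, Nat.mul_div_cancel_left _ hd]) }
  rw [Nat.card_congr e, Nat.card_eq_fintype_card, Fintype.card_fin]

/-- Splitting `ZMod (p^n)` as a product keeping track of reduction mod `p`. -/
def zmodSplit (p n : ℕ) (hp : 1 < p) (hn : 1 ≤ n) :
    ZMod (p ^ n) ≃ ZMod p × Fin (p ^ (n - 1)) := by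
  haveI : NeZero p := ⟨by omega⟩
  haveI : NeZero (p ^ n) := ⟨pow_ne_zero _ (by omega)⟩
  have hpn : p ^ n = p * p ^ (n - 1) := by
    rw [← pow_succ']
    congr 1
    omega
  exact
  { toFun := fun x => ((x.val : ZMod p), ⟨x.val / p,
      Nat.div_lt_of_lt_mul (by rw [← hpn]; exact ZMod.val_lt x)⟩)
    invFun := fun uk => (((uk.1.val + p * (uk.2 : ℕ) : ℕ) : ZMod (p ^ n)))
    left_inv := fun x => by
      show (((((x.val : ZMod p)).val + p * (x.val / p) : ℕ)) : ZMod (p ^ n)) = x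
      rw [ZMod.val_natCast, Nat.mod_add_div]
      exact ZMod.natCast_rightInverse x
    right_inv := fun uk => by
      have h1 : uk.1.val < p := ZMod.val_lt uk.1
      have h2 : (uk.2 : ℕ) < p ^ (n - 1) := uk.2.2
      have hlt : uk.1.val + p * (uk.2 : ℕ) < p ^ n := by
        calc uk.1.val + p * (uk.2 : ℕ) < p + p * (uk.2 : ℕ) := by omega
          _ = p * ((uk.2 : ℕ) + 1) := by ring
          _ ≤ p * p ^ (n - 1) := Nat.mul_le_mul_left p (by omega)
          _ = p ^ n := hpn.symm
      have hval : (((uk.1.val + p * (uk.2 : ℕ) : ℕ) : ZMod (p ^ n))).val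
          = uk.1.val + p * (uk.2 : ℕ) := ZMod.val_cast_of_lt hlt
      rw [Prod.ext_iff]
      constructor
      · show ((((uk.1.val + p * (uk.2 : ℕ) : ℕ) : ZMod (p ^ n))).val : ZMod p) = uk.1
        rw [hval]
        push_cast [ZMod.natCast_self]
        simpa using ZMod.natCast_rightInverse uk.1
      · apply Fin.ext
        show (((uk.1.val + p * (uk.2 : ℕ) : ℕ) : ZMod (p ^ n))).val / p = (uk.2 : ℕ)
        rw [hval, Nat.add_mul_div_left _ _ (by omega : 0 < p), Nat.div_eq_of_lt h1, zero_add] }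

lemma zmodSplit_fst (p n : ℕ) (hp : 1 < p) (hn : 1 ≤ n) (x : ZMod (p ^ n)) :
    (zmodSplit p n hp hn x).1 = (x.val : ZMod p) := rfl

noncomputable def unitsEquivIsUnit' {M : Type*} [Monoid M] : Mˣ ≃ {x : M // IsUnit x} where
  toFun u := ⟨u, u.isUnit⟩
  invFun x := x.2.unit
  left_inv u := Units.ext u.isUnit.unit_spec
  right_inv x := Subtype.ext x.2.unit_spec

lemma card_unit_subtype (p n : ℕ) (hp : p.Prime) (hn : 1 ≤ n) :
    Nat.card {x : ZMod (p ^ n) // (x.val : ZMod p) ≠ 0} = p ^ (n - 1) * (p - 1) := by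
  haveI : NeZero p := ⟨hp.ne_zero⟩
  haveI : NeZero (p ^ n) := ⟨pow_ne_zero _ hp.ne_zero⟩
  have hiff : ∀ x : ZMod (p ^ n), ((x.val : ZMod p) ≠ 0) ↔ Nat.Coprime x.val (p ^ n) := by
    intro x
    rw [Ne, ZMod.natCast_eq_zero_iff, Nat.coprime_pow_right_iff hn, Nat.coprime_comm]
    exact (hp.coprime_iff_not_dvd).symm
  rw [Nat.card_congr (Equiv.subtypeEquivRight hiff),
    Nat.card_congr (ZMod.unitsEquivCoprime (n := p ^ n)).symm,
    Nat.card_eq_fintype_card, ZMod.card_units_eq_totient,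
    Nat.totient_prime_pow hp hn]

end Counting

section Assembly

noncomputable def autEquiv {G : Type*} [AddCommGroup G] :
    AddAut G ≃ {f : G →+ G // Bijective f} where
  toFun e := ⟨e.toAddMonoidHom, e.bijective⟩
  invFun f := AddEquiv.ofBijective f.1 f.2
  left_inv e := by ext x; rfl
  right_inv f := Subtype.ext (by ext x; rfl)

lemma card_aut_eq (p a b : ℕ) (hp : p.Prime) (ha : 1 ≤ a) (hab : a ≤ b) :
    Nat.card (AddAut (ZMod (p ^ a) × ZMod (p ^ b))) =
      Nat.card {xy : (ZMod (p ^ a) × ZMod (p ^ b)) × (ZMod (p ^ a) × ZMod (p ^ b)) //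
        p ^ a • xy.1 = 0 ∧
          ((xy.1.1.val : ZMod p) * (xy.2.2.val : ZMod p)
            - (xy.2.1.val : ZMod p) * (xy.1.2.val : ZMod p)) ≠ 0} := by
  haveI : Fact p.Prime := ⟨hp⟩
  haveI : NeZero (p ^ a) := ⟨pow_ne_zero _ hp.ne_zero⟩
  haveI : NeZero (p ^ b) := ⟨pow_ne_zero _ hp.ne_zero⟩
  have h1a : 1 < p ^ a := Nat.one_lt_pow (by omega) hp.one_lt
  have h1b : 1 < p ^ b := Nat.one_lt_pow (by omega) hp.one_lt
  set E := endEquiv p a b hab h1a h1b with hE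
  have hiff : ∀ s : {xy : (ZMod (p ^ a) × ZMod (p ^ b)) × (ZMod (p ^ a) × ZMod (p ^ b)) //
      p ^ a • xy.1 = 0},
      Bijective (E s) ↔
        ((s.1.1.1.val : ZMod p) * (s.1.2.2.val : ZMod p)
          - (s.1.2.1.val : ZMod p) * (s.1.1.2.val : ZMod p)) ≠ 0 := by
    intro s
    have hbs : Bijective (E s) ↔ Surjective (E s) :=
      ⟨fun h => h.2, fun h => ⟨Finite.injective_iff_surjective.mpr h, h⟩⟩
    have hl := E.left_inv s
    have h1 : E s (1, 0) = s.1.1 := congrArg (fun t => t.1.1) hl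
    have h2 : E s (0, 1) = s.1.2 := congrArg (fun t => t.1.2) hl
    rw [hbs, surj_iff_det p a b hp ha hab (E s), h1, h2]
  calc Nat.card (AddAut (ZMod (p ^ a) × ZMod (p ^ b)))
      = Nat.card {f : (ZMod (p ^ a) × ZMod (p ^ b)) →+ (ZMod (p ^ a) × ZMod (p ^ b)) //
          Bijective f} := Nat.card_congr autEquiv
    _ = Nat.card {s : {xy : (ZMod (p ^ a) × ZMod (p ^ b)) × (ZMod (p ^ a) × ZMod (p ^ b)) //
          p ^ a • xy.1 = 0} // Bijective (E s)} :=
        (Nat.card_congr (E.subtypeEquiv (fun s => Iff.rfl))).symm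
    _ = Nat.card {s : {xy : (ZMod (p ^ a) × ZMod (p ^ b)) × (ZMod (p ^ a) × ZMod (p ^ b)) //
          p ^ a • xy.1 = 0} //
          ((s.1.1.1.val : ZMod p) * (s.1.2.2.val : ZMod p)
            - (s.1.2.1.val : ZMod p) * (s.1.1.2.val : ZMod p)) ≠ 0} :=
        Nat.card_congr (Equiv.subtypeEquivRight hiff)
    _ = _ := Nat.card_congr (Equiv.subtypeSubtypeEquivSubtypeInter
        (fun xy : (ZMod (p ^ a) × ZMod (p ^ b)) × (ZMod (p ^ a) × ZMod (p ^ b)) =>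
          p ^ a • xy.1 = 0)
        (fun xy => ((xy.1.1.val : ZMod p) * (xy.2.2.val : ZMod p)
            - (xy.2.1.val : ZMod p) * (xy.1.2.val : ZMod p)) ≠ 0))

end Assembly

section CaseLt

lemma card_dvd_val' (N d m : ℕ) (h : N = d * m) (hd : 0 < d) (hm : 0 < m) :
    Nat.card {x : ZMod N // d ∣ x.val} = m := by
  subst h
  exact card_dvd_val d m hd hm

lemma smul_fst_zero (p a : ℕ) [NeZero (p ^ a)] (x : ZMod (p ^ a)) : p ^ a • x = 0 := by
  have h : ((p ^ a : ℕ) : ZMod (p ^ a)) = 0 := ZMod.natCast_self _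
  rw [nsmul_eq_mul, h, zero_mul]

lemma smul_snd_iff (p a b : ℕ) (hp : p.Prime) (hab : a ≤ b) [NeZero (p ^ b)]
    (x : ZMod (p ^ b)) :
    p ^ a • x = 0 ↔ p ^ (b - a) ∣ x.val := by
  have hx : x = ((x.val : ℕ) : ZMod (p ^ b)) := (ZMod.natCast_rightInverse x).symm
  have h1 : p ^ a • x = (((p ^ a * x.val : ℕ) : ZMod (p ^ b))) := by
    conv_lhs => rw [hx]
    rw [nsmul_eq_mul, ← Nat.cast_mul]
  rw [h1, ZMod.natCast_eq_zero_iff]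
  have hsplit : p ^ b = p ^ a * p ^ (b - a) := by
    rw [← pow_add]; congr 1; omega
  constructor
  · intro h
    have h' : p ^ a * p ^ (b - a) ∣ p ^ a * x.val := by rwa [← hsplit]
    exact (mul_dvd_mul_iff_left (a := (p ^ a : ℕ)) (pow_ne_zero _ hp.ne_zero)).mp h'
  · intro h
    calc (p ^ b : ℕ) = p ^ a * p ^ (b - a) := hsplit
      _ ∣ p ^ a * x.val := mul_dvd_mul_left _ h

lemma card_case_lt (p a b : ℕ) (hp : p.Prime) (ha : 1 ≤ a) (hab : a < b) :
    Nat.card {xy : (ZMod (p ^ a) × ZMod (p ^ b)) × (ZMod (p ^ a) × ZMod (p ^ b)) //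
        p ^ a • xy.1 = 0 ∧
          ((xy.1.1.val : ZMod p) * (xy.2.2.val : ZMod p)
            - (xy.2.1.val : ZMod p) * (xy.1.2.val : ZMod p)) ≠ 0}
      = (p - 1) ^ 2 * p ^ (3 * a + b - 2) := by
  haveI : Fact p.Prime := ⟨hp⟩
  haveI : NeZero p := ⟨hp.ne_zero⟩
  haveI : NeZero (p ^ a) := ⟨pow_ne_zero _ hp.ne_zero⟩
  haveI : NeZero (p ^ b) := ⟨pow_ne_zero _ hp.ne_zero⟩
  -- reshape the predicate
  have hshape : ∀ xy : (ZMod (p ^ a) × ZMod (p ^ b)) × (ZMod (p ^ a) × ZMod (p ^ b)),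
      (p ^ a • xy.1 = 0 ∧
        ((xy.1.1.val : ZMod p) * (xy.2.2.val : ZMod p)
          - (xy.2.1.val : ZMod p) * (xy.1.2.val : ZMod p)) ≠ 0) ↔
      ((((xy.1.1.val : ZMod p) ≠ 0) ∧ p ^ a • xy.1.2 = 0) ∧ ((xy.2.2.val : ZMod p) ≠ 0)) := by
    intro xy
    have hfst : p ^ a • xy.1 = 0 ↔ p ^ a • xy.1.2 = 0 := by
      constructor
      · intro h
        have := congrArg Prod.snd h
        simpa using this
      · intro h
        have h1 := smul_fst_zero p a xy.1.1
        rw [Prod.ext_iff]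
        exact ⟨h1, h⟩
    constructor
    · rintro ⟨h0, hd⟩
      have h2 : p ^ a • xy.1.2 = 0 := hfst.mp h0
      have hz : ((xy.1.2.val : ZMod p)) = 0 := by
        rw [ZMod.natCast_eq_zero_iff]
        have := (smul_snd_iff p a b hp hab.le xy.1.2).mp h2
        exact dvd_trans (dvd_pow_self p (by omega : b - a ≠ 0)) this
      rw [hz, mul_zero, sub_zero] at hd
      rcases mul_ne_zero_iff.mp hd with ⟨h1', h2'⟩
      exact ⟨⟨h1', h2⟩, h2'⟩
    · rintro ⟨⟨h1', h2⟩, h2'⟩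
      refine ⟨hfst.mpr h2, ?_⟩
      have hz : ((xy.1.2.val : ZMod p)) = 0 := by
        rw [ZMod.natCast_eq_zero_iff]
        have := (smul_snd_iff p a b hp hab.le xy.1.2).mp h2
        exact dvd_trans (dvd_pow_self p (by omega : b - a ≠ 0)) this
      rw [hz, mul_zero, sub_zero]
      exact mul_ne_zero h1' h2'
  rw [Nat.card_congr (Equiv.subtypeEquivRight hshape)]
  rw [Nat.card_congr (Equiv.subtypeProdEquivProd
    (p := fun x : ZMod (p ^ a) × ZMod (p ^ b) => ((x.1.val : ZMod p) ≠ 0) ∧ p ^ a • x.2 = 0)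
    (q := fun y : ZMod (p ^ a) × ZMod (p ^ b) => ((y.2.val : ZMod p) ≠ 0)))]
  rw [Nat.card_prod]
  -- first factor
  rw [Nat.card_congr (Equiv.subtypeProdEquivProd
    (p := fun x₁ : ZMod (p ^ a) => ((x₁.val : ZMod p) ≠ 0))
    (q := fun x₂ : ZMod (p ^ b) => p ^ a • x₂ = 0))]
  rw [Nat.card_prod]
  -- second factor: y₁ is free
  have hy : ∀ y : ZMod (p ^ a) × ZMod (p ^ b),
      ((y.2.val : ZMod p) ≠ 0) ↔ (True ∧ ((y.2.val : ZMod p) ≠ 0)) := by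
    intro y; simp
  rw [Nat.card_congr ((Equiv.subtypeEquivRight hy).trans (Equiv.subtypeProdEquivProd
    (p := fun _ : ZMod (p ^ a) => True)
    (q := fun y₂ : ZMod (p ^ b) => ((y₂.val : ZMod p) ≠ 0))))]
  rw [Nat.card_prod]
  rw [Nat.card_congr (Equiv.subtypeUnivEquiv (fun _ : ZMod (p ^ a) => trivial))]
  -- individual cardinalities
  rw [card_unit_subtype p a hp ha, card_unit_subtype p b hp (by omega)]
  rw [Nat.card_congr (Equiv.subtypeEquivRight (smul_snd_iff p a b hp hab.le)),
    card_dvd_val' (p ^ b) (p ^ (b - a)) (p ^ a)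
      (by rw [← pow_add]; congr 1; omega) (pow_pos hp.pos _) (pow_pos hp.pos _)]
  rw [Nat.card_zmod]
  -- arithmetic
  have hpow : p ^ (a - 1) * p ^ a * p ^ a * p ^ (b - 1) = p ^ (3 * a + b - 2) := by
    rw [← pow_add, ← pow_add, ← pow_add]
    congr 1
    omega
  calc p ^ (a - 1) * (p - 1) * p ^ a * (p ^ a * (p ^ (b - 1) * (p - 1)))
      = (p - 1) ^ 2 * (p ^ (a - 1) * p ^ a * p ^ a * p ^ (b - 1)) := by ring
    _ = (p - 1) ^ 2 * p ^ (3 * a + b - 2) := by rw [hpow]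

end CaseLt

section CaseEq

variable {F K : Type*}

/-- Shuffle equivalence separating the mod-p parts from the rest. -/
def shuffle : ((F × K) × (F × K)) × ((F × K) × (F × K)) ≃
    ((F × F) × (F × F)) × (K × K × K × K) where
  toFun w := (((w.1.1.1, w.1.2.1), (w.2.1.1, w.2.2.1)), (w.1.1.2, w.1.2.2, w.2.1.2, w.2.2.2))
  invFun v := (((v.1.1.1, v.2.1), (v.1.1.2, v.2.2.1)), ((v.1.2.1, v.2.2.2.1), (v.1.2.2, v.2.2.2.2)))
  left_inv w := rfl
  right_inv v := rfl

/-- Pairs of pairs as 2×2 matrices (columns). -/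
def toMat (F : Type*) : ((F × F) × (F × F)) ≃ Matrix (Fin 2) (Fin 2) F where
  toFun v := !![v.1.1, v.2.1; v.1.2, v.2.2]
  invFun M := ((M 0 0, M 1 0), (M 0 1, M 1 1))
  left_inv v := by simp
  right_inv M := (Matrix.eta_fin_two M).symm

lemma card_det_ne_zero (p : ℕ) (hp : p.Prime) :
    Nat.card {v : ((ZMod p × ZMod p) × (ZMod p × ZMod p)) //
        v.1.1 * v.2.2 - v.2.1 * v.1.2 ≠ 0}
      = (p ^ 2 - 1) * (p ^ 2 - p) := by
  haveI : Fact p.Prime := ⟨hp⟩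
  have hiff : ∀ v : ((ZMod p × ZMod p) × (ZMod p × ZMod p)),
      (v.1.1 * v.2.2 - v.2.1 * v.1.2 ≠ 0) ↔ IsUnit (toMat (ZMod p) v) := by
    intro v
    rw [Matrix.isUnit_iff_isUnit_det]
    show _ ↔ IsUnit (!![v.1.1, v.2.1; v.1.2, v.2.2]).det
    rw [Matrix.det_fin_two_of, isUnit_iff_ne_zero]
  rw [Nat.card_congr ((Equiv.subtypeEquivRight hiff).trans
    (((toMat (ZMod p)).subtypeEquiv (fun v => Iff.rfl)).trans unitsEquivIsUnit'.symm))]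
  have hGL : Nat.card (GL (Fin 2) (ZMod p)) = (p ^ 2 - 1) * (p ^ 2 - p) := by
    rw [Matrix.card_GL_field]
    rw [Fin.prod_univ_two]
    simp [ZMod.card]
  exact hGL

lemma card_case_eq (p a : ℕ) (hp : p.Prime) (ha : 1 ≤ a) :
    Nat.card {xy : (ZMod (p ^ a) × ZMod (p ^ a)) × (ZMod (p ^ a) × ZMod (p ^ a)) //
        p ^ a • xy.1 = 0 ∧
          ((xy.1.1.val : ZMod p) * (xy.2.2.val : ZMod p)
            - (xy.2.1.val : ZMod p) * (xy.1.2.val : ZMod p)) ≠ 0}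
      = (p - 1) ^ 2 * (p + 1) * p ^ (4 * a - 3) := by
  haveI : Fact p.Prime := ⟨hp⟩
  haveI : NeZero p := ⟨hp.ne_zero⟩
  haveI : NeZero (p ^ a) := ⟨pow_ne_zero _ hp.ne_zero⟩
  -- drop the trivially true condition
  have htriv : ∀ xy : (ZMod (p ^ a) × ZMod (p ^ a)) × (ZMod (p ^ a) × ZMod (p ^ a)),
      (p ^ a • xy.1 = 0 ∧
          ((xy.1.1.val : ZMod p) * (xy.2.2.val : ZMod p)
            - (xy.2.1.val : ZMod p) * (xy.1.2.val : ZMod p)) ≠ 0) ↔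
        ((xy.1.1.val : ZMod p) * (xy.2.2.val : ZMod p)
            - (xy.2.1.val : ZMod p) * (xy.1.2.val : ZMod p)) ≠ 0 := by
    intro xy
    have h0 : p ^ a • xy.1 = 0 := smul_top p a a le_rfl xy.1
    simp [h0]
  rw [Nat.card_congr (Equiv.subtypeEquivRight htriv)]
  -- split off the mod-p parts
  set zs := zmodSplit p a hp.one_lt ha with hzs
  set Eq4 := (zs.prodCongr zs).prodCongr (zs.prodCongr zs) with hEq4
  rw [Nat.card_congr (Eq4.subtypeEquiv
    (p := fun xy : (ZMod (p ^ a) × ZMod (p ^ a)) × (ZMod (p ^ a) × ZMod (p ^ a)) =>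
      ((xy.1.1.val : ZMod p) * (xy.2.2.val : ZMod p)
        - (xy.2.1.val : ZMod p) * (xy.1.2.val : ZMod p)) ≠ 0)
    (q := fun w : ((ZMod p × Fin (p ^ (a - 1))) × (ZMod p × Fin (p ^ (a - 1)))) ×
      ((ZMod p × Fin (p ^ (a - 1))) × (ZMod p × Fin (p ^ (a - 1)))) =>
      (w.1.1.1 * w.2.2.1 - w.2.1.1 * w.1.2.1) ≠ 0)
    (fun xy => Iff.rfl))]
  -- now a subtype of ((F×K)×(F×K))×((F×K)×(F×K)) with predicate on the F-parts
  rw [Nat.card_congr ((shuffle (F := ZMod p) (K := Fin (p ^ (a - 1)))).subtypeEquiv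
    (q := fun z : ((ZMod p × ZMod p) × (ZMod p × ZMod p)) ×
      (Fin (p ^ (a - 1)) × Fin (p ^ (a - 1)) × Fin (p ^ (a - 1)) × Fin (p ^ (a - 1))) =>
      (z.1.1.1 * z.1.2.2 - z.1.2.1 * z.1.1.2) ≠ 0)
    (p := fun w : ((ZMod p × Fin (p ^ (a - 1))) × (ZMod p × Fin (p ^ (a - 1)))) ×
      ((ZMod p × Fin (p ^ (a - 1))) × (ZMod p × Fin (p ^ (a - 1)))) =>
      (w.1.1.1 * w.2.2.1 - w.2.1.1 * w.1.2.1) ≠ 0)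
    (fun w => Iff.rfl))]
  -- predicate only on the first component
  have hy : ∀ z : ((ZMod p × ZMod p) × (ZMod p × ZMod p)) ×
      (Fin (p ^ (a - 1)) × Fin (p ^ (a - 1)) × Fin (p ^ (a - 1)) × Fin (p ^ (a - 1))),
      ((z.1.1.1 * z.1.2.2 - z.1.2.1 * z.1.1.2) ≠ 0) ↔
        (((z.1.1.1 * z.1.2.2 - z.1.2.1 * z.1.1.2) ≠ 0) ∧ True) := by
    intro z; simp
  rw [Nat.card_congr ((Equiv.subtypeEquivRight hy).trans (Equiv.subtypeProdEquivProd
    (p := fun v : ((ZMod p × ZMod p) × (ZMod p × ZMod p)) =>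
      (v.1.1 * v.2.2 - v.2.1 * v.1.2) ≠ 0)
    (q := fun _ : (Fin (p ^ (a - 1)) × Fin (p ^ (a - 1)) × Fin (p ^ (a - 1)) ×
      Fin (p ^ (a - 1))) => True)))]
  rw [Nat.card_prod]
  rw [Nat.card_congr (Equiv.subtypeUnivEquiv (fun _ => trivial))]
  rw [card_det_ne_zero p hp]
  simp only [Nat.card_prod, Nat.card_eq_fintype_card, Fintype.card_prod, Fintype.card_fin]
  -- arithmetic
  have h1 : (p ^ 2 - 1 : ℕ) = (p + 1) * (p - 1) := by
    have := Nat.sq_sub_sq p 1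
    simpa using this
  have h2 : (p ^ 2 - p : ℕ) = p * (p - 1) := by
    have := Nat.mul_sub p p 1
    simp only [mul_one] at this
    rw [this, ← pow_two]
  have hpow : p * (p ^ (a - 1) * (p ^ (a - 1) * (p ^ (a - 1) * p ^ (a - 1)))) =
      p ^ (4 * a - 3) := by
    rw [← pow_add, ← pow_add, ← pow_add, ← pow_succ']
    congr 1
    omega
  calc (p ^ 2 - 1) * (p ^ 2 - p) *
        (p ^ (a - 1) * (p ^ (a - 1) * (p ^ (a - 1) * p ^ (a - 1))))
      = ((p + 1) * (p - 1)) * (p * (p - 1)) *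
        (p ^ (a - 1) * (p ^ (a - 1) * (p ^ (a - 1) * p ^ (a - 1)))) := by rw [h1, h2]
    _ = (p - 1) ^ 2 * (p + 1) *
        (p * (p ^ (a - 1) * (p ^ (a - 1) * (p ^ (a - 1) * p ^ (a - 1))))) := by ring
    _ = (p - 1) ^ 2 * (p + 1) * p ^ (4 * a - 3) := by rw [hpow]

end CaseEq

/-- Let `p` be a prime and `1 ≤ n₁ ≤ n₂`. Then
`|Aut(ℤ_{p^{n₁}} × ℤ_{p^{n₂}})| = (p−1)² (p+1)^{⌊n₁/n₂⌋} p^{3n₁ + n₂ − ⌊n₁/n₂⌋ − 2}`. -/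
theorem stmt_13 (p : ℕ) (hp : p.Prime) (n₁ n₂ : ℕ) (h1 : 1 ≤ n₁) (h12 : n₁ ≤ n₂) :
    Nat.card (AddAut (ZMod (p ^ n₁) × ZMod (p ^ n₂))) =
      (p - 1) ^ 2 * (p + 1) ^ (n₁ / n₂) * p ^ (3 * n₁ + n₂ - n₁ / n₂ - 2) := by
  rcases lt_or_eq_of_le h12 with hlt | heq
  · rw [card_aut_eq p n₁ n₂ hp h1 h12, card_case_lt p n₁ n₂ hp h1 hlt,
      Nat.div_eq_of_lt hlt]
    simp
  · subst heq
    rw [card_aut_eq p n₁ n₁ hp h1 le_rfl, card_case_eq p n₁ hp h1,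
      Nat.div_self (by omega : 0 < n₁), pow_one]
    have h : 4 * n₁ - 3 = 3 * n₁ + n₁ - 1 - 2 := by omega
    rw [h]
end

section
/- Let p be a prime and let G be a non-cyclic abelian p-group of order pⁿ. Then |Aut(G)| ≥ pⁿ · (p−1)². -/
open Function

section Shear

variable {A B : Type*} [AddCommGroup A] [AddCommGroup B]

/-- The shear `(x, y) ↦ (x + ψ y, y)` as an automorphism of `A × B`. -/
private def shearL (ψ : B →+ A) : (A × B) ≃+ (A × B) where
  toFun z := (z.1 + ψ z.2, z.2)
  invFun z := (z.1 - ψ z.2, z.2)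
  left_inv z := by simp
  right_inv z := by simp
  map_add' z w := by
    ext
    · simp [add_add_add_comm]
    · rfl

/-- The shear `(x, y) ↦ (x, y + φ x)` as an automorphism of `A × B`. -/
private def shearR (φ : A →+ B) : (A × B) ≃+ (A × B) where
  toFun z := (z.1, z.2 + φ z.1)
  invFun z := (z.1, z.2 - φ z.1)
  left_inv z := by simp
  right_inv z := by simp
  map_add' z w := by
    ext
    · rfl
    · simp [add_add_add_comm]

private def parab (α : A ≃+ A) (β : B ≃+ B) (ψ : B →+ A) (φ : A →+ B) :
    (A × B) ≃+ (A × B) :=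
  ((shearR φ).trans (AddEquiv.prodCongr α β)).trans (shearL ψ)

private lemma parab_apply (α : A ≃+ A) (β : B ≃+ B) (ψ : B →+ A) (φ : A →+ B) (z : A × B) :
    parab α β ψ φ z = (α z.1 + ψ (β (z.2 + φ z.1)), β (z.2 + φ z.1)) := rfl

private lemma parab_injective :
    Function.Injective (fun q : (A ≃+ A) × (B ≃+ B) × (B →+ A) × (A →+ B) =>
      parab q.1 q.2.1 q.2.2.1 q.2.2.2) := by
  rintro ⟨α, β, ψ, φ⟩ ⟨α', β', ψ', φ'⟩ h
  have hz : ∀ z : A × B, parab α β ψ φ z = parab α' β' ψ' φ' z := fun z =>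
    DFunLike.congr_fun h z
  have hβ : β = β' := by
    ext y
    have := congrArg Prod.snd (hz (0, y))
    simpa [parab_apply] using this
  subst hβ
  have hψ : ψ = ψ' := by
    ext y
    have := congrArg Prod.fst (hz (0, β.symm y))
    simpa [parab_apply] using this
  subst hψ
  have hφ : φ = φ' := by
    ext x
    have := congrArg Prod.snd (hz (x, 0))
    simpa [parab_apply] using β.injective this
  subst hφ
  have hα : α = α' := by
    ext x
    have := congrArg Prod.fst (hz (x, 0))
    simpa [parab_apply] using this
  rw [hα]

private lemma finite_hom [Finite A] [Finite B] : Finite (A →+ B) :=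
  Finite.of_injective (fun f => (f : A → B)) DFunLike.coe_injective

private lemma finite_equiv [Finite A] [Finite B] : Finite (A ≃+ B) :=
  Finite.of_injective (fun f => (f : A → B)) DFunLike.coe_injective

/-- The key counting lemma. -/
private lemma card_parab [Finite A] [Finite B] :
    Nat.card (A ≃+ A) * Nat.card (B ≃+ B) *
      (Nat.card (B →+ A) * Nat.card (A →+ B)) ≤ Nat.card ((A × B) ≃+ (A × B)) := by
  haveI := @finite_equiv (A × B) (A × B) _ _ _ _
  calc Nat.card (A ≃+ A) * Nat.card (B ≃+ B) * (Nat.card (B →+ A) * Nat.card (A →+ B))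
      = Nat.card ((A ≃+ A) × (B ≃+ B) × (B →+ A) × (A →+ B)) := by
        simp [Nat.card_prod, mul_assoc]
    _ ≤ Nat.card ((A × B) ≃+ (A × B)) :=
        Nat.card_le_card_of_injective _ parab_injective

end Shear

section Counting

/-- Count of automorphisms of `ZMod m`. -/
private lemma card_aut_zmod (m : ℕ) [NeZero m] :
    Nat.card (ZMod m ≃+ ZMod m) = m.totient := by
  rw [Nat.card_congr ((ZMod.AddAutEquivUnits m).toEquiv.trans Additive.toMul), Nat.card_eq_fintype_card,
    ZMod.card_units_eq_totient]

/-- If `p ∣ q` and `p` divides the order of `N`, there are at least `p`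
homomorphisms `ZMod q →+ N`. -/
private lemma le_card_zmod_hom (p q : ℕ) (hp : p.Prime) [NeZero q] (N : Type*) [AddCommGroup N]
    [Finite N] (hq : p ∣ q) (hN : p ∣ Nat.card N) : p ≤ Nat.card (ZMod q →+ N) := by
  haveI := Fintype.ofFinite N
  haveI : Fact p.Prime := ⟨hp⟩
  obtain ⟨x, hx⟩ := exists_prime_addOrderOf_dvd_card (G := N) p
    (by rwa [← Nat.card_eq_fintype_card])
  haveI : Finite (ZMod q →+ N) := finite_hom
  have h0 : ∀ j : ℕ, (zmultiplesHom N (j • x)) (q : ℤ) = 0 := by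
    intro j
    have hdvd : addOrderOf (j • x) ∣ q := ((addOrderOf_smul_dvd j).trans (hx ▸ hq))
    have := addOrderOf_dvd_iff_nsmul_eq_zero.mp hdvd
    simpa [zmultiplesHom_apply, natCast_zsmul] using this
  set F : Fin p → (ZMod q →+ N) := fun j => ZMod.lift q ⟨zmultiplesHom N (j.1 • x), h0 j.1⟩
    with hF
  have hF1 : ∀ j : Fin p, F j (1 : ZMod q) = j.1 • x := by
    intro j
    have : ((1 : ℤ) : ZMod q) = 1 := Int.cast_one
    rw [hF, ← this, ZMod.lift_coe]
    simp
  have hinj : Function.Injective F := by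
    intro j j' hjj
    have : j.1 • x = j'.1 • x := by rw [← hF1 j, ← hF1 j', hjj]
    exact Fin.ext (nsmul_injOn_Iio_addOrderOf (by simpa [hx] using j.isLt)
      (by simpa [hx] using j'.isLt) this)
  calc p = Nat.card (Fin p) := by simp
    _ ≤ Nat.card (ZMod q →+ N) := Nat.card_le_card_of_injective F hinj

/-- Splitting off one coordinate of a product, additively. -/
private def piSplitAtAdd {ι : Type} [DecidableEq ι] (i : ι) (f : ι → Type)
    [∀ j, AddCommGroup (f j)] :
    (∀ j, f j) ≃+ f i × (∀ j : {j // j ≠ i}, f j.1) :=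
  { Equiv.piSplitAt i f with map_add' := fun _ _ => rfl }

/-- Precomposition with evaluation is injective on hom sets. -/
private lemma le_card_pi_hom {ι : Type} [DecidableEq ι] (f : ι → Type)
    [∀ j, AddCommGroup (f j)] (i : ι) (N : Type*) [AddCommGroup N] [Finite N]
    [Finite (∀ j, f j)] :
    Nat.card (f i →+ N) ≤ Nat.card ((∀ j, f j) →+ N) := by
  haveI : Finite ((∀ j, f j) →+ N) := finite_hom
  refine Nat.card_le_card_of_injective
    (fun g => g.comp (Pi.evalAddMonoidHom f i)) ?_
  intro g g' hgg
  ext x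
  have := congrArg (fun k => k ((AddMonoidHom.single f i) x)) hgg
  simpa using this

end Counting

/-- Weak bound: an abelian `p`-group of order `p ^ m` (with `m ≥ 1`) has at least
`p ^ (m-1) * (p-1)` automorphisms. -/
private lemma weak_bound (p : ℕ) (hp : p.Prime) (m : ℕ) :
    ∀ (B : Type) [AddCommGroup B] [Finite B], 1 ≤ m → Nat.card B = p ^ m →
      p ^ (m - 1) * (p - 1) ≤ Nat.card (B ≃+ B) := by
  induction m using Nat.strong_induction_on with
  | _ m IH =>
  intro B _ _ hm hB
  classical
  obtain ⟨ι, fι, nf, h1, ⟨eqv0⟩⟩ := AddCommGroup.equiv_directSum_zmod_of_finite' B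
  haveI := fι
  let eqv : B ≃+ ∀ i, ZMod (nf i) := eqv0.trans (DirectSum.addEquivProd _)
  have hprod : ∏ i, nf i = p ^ m := by
    have h := Nat.card_congr eqv.toEquiv
    rw [hB, Nat.card_pi] at h
    simpa [Nat.card_zmod] using h.symm
  have hpe : ∀ i, ∃ e, 1 ≤ e ∧ nf i = p ^ e := by
    intro i
    have hdvd : nf i ∣ p ^ m := hprod ▸ Finset.dvd_prod_of_mem nf (Finset.mem_univ i)
    obtain ⟨e, -, he⟩ := (Nat.dvd_prime_pow hp).mp hdvd
    refine ⟨e, ?_, he⟩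
    rcases Nat.eq_zero_or_pos e with rfl | h
    · have h2 := h1 i
      rw [he] at h2
      simp at h2
    · exact h
  haveI : Nonempty ι := by
    by_contra hne
    haveI : IsEmpty ι := not_nonempty_iff.mp hne
    rw [Finset.univ_eq_empty, Finset.prod_empty] at hprod
    have h2 : 1 < p ^ m := Nat.one_lt_pow (by omega) hp.one_lt
    omega
  obtain ⟨i₀⟩ := ‹Nonempty ι›
  obtain ⟨e₀, he₀, hnf₀⟩ := hpe i₀
  haveI : NeZero (nf i₀) := ⟨by have := h1 i₀; omega⟩
  set C := ∀ j : {j // j ≠ i₀}, ZMod (nf j.1) with hC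
  let E : B ≃+ ZMod (nf i₀) × C := eqv.trans (piSplitAtAdd i₀ _)
  haveI : Finite (ZMod (nf i₀) × C) := Finite.of_equiv B E.toEquiv
  haveI : Finite C := Finite.of_surjective (Prod.snd : ZMod (nf i₀) × C → C)
    Prod.snd_surjective
  have hcardsplit : p ^ e₀ * Nat.card C = p ^ m := by
    have h := Nat.card_congr E.toEquiv
    rw [hB, Nat.card_prod, Nat.card_zmod, hnf₀] at h
    exact h.symm
  obtain ⟨c, hc_le, hc⟩ := (Nat.dvd_prime_pow hp).mp
    (Dvd.intro_left _ hcardsplit : Nat.card C ∣ p ^ m)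
  have hsum : e₀ + c = m := by
    have hpow : p ^ (e₀ + c) = p ^ m := by rw [pow_add, ← hc]; exact hcardsplit
    exact Nat.pow_right_injective hp.two_le hpow
  have hAutB : Nat.card ((ZMod (nf i₀) × C) ≃+ (ZMod (nf i₀) × C)) = Nat.card (B ≃+ B) :=
    (Nat.card_congr (AddAut.congr E).toEquiv).symm
  have hAutA : Nat.card (ZMod (nf i₀) ≃+ ZMod (nf i₀)) = p ^ (e₀ - 1) * (p - 1) := by
    rw [card_aut_zmod, hnf₀, Nat.totient_prime_pow hp (by omega)]
  have key := card_parab (A := ZMod (nf i₀)) (B := C)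
  rw [hAutB] at key
  haveI : Finite (C →+ ZMod (nf i₀)) := finite_hom
  haveI : Finite (ZMod (nf i₀) →+ C) := finite_hom
  haveI : Nonempty (C →+ ZMod (nf i₀)) := ⟨0⟩
  haveI : Nonempty (C ≃+ C) := ⟨AddEquiv.refl C⟩
  have hp1 : 1 ≤ p - 1 := by have := hp.two_le; omega
  rcases Nat.eq_zero_or_pos c with hc0 | hc1
  · -- `C` is trivial
    have hm_eq : m = e₀ := by omega
    refine le_trans ?_ key
    have hCpos : 1 ≤ Nat.card (C ≃+ C) := Nat.card_pos
    have hh1 : 1 ≤ Nat.card (C →+ ZMod (nf i₀)) := Nat.card_pos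
    have hh2 : 1 ≤ Nat.card (ZMod (nf i₀) →+ C) := Nat.card_pos (α := ZMod (nf i₀) →+ C)
      |>.le.trans (le_of_eq rfl) |> fun _ => Nat.card_pos
    calc p ^ (m - 1) * (p - 1)
        = Nat.card (ZMod (nf i₀) ≃+ ZMod (nf i₀)) * 1 * (1 * 1) := by
          rw [hAutA, hm_eq]; ring
      _ ≤ _ := by
          refine Nat.mul_le_mul (Nat.mul_le_mul le_rfl hCpos) (Nat.mul_le_mul hh1 ?_)
          exact Nat.card_pos
  · -- `C` is nontrivial: use the induction hypothesis and a nontrivial hom count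
    have hC1 : p ^ (c - 1) * (p - 1) ≤ Nat.card (C ≃+ C) :=
      IH c (by omega) C hc1 hc
    have hHom : p ≤ Nat.card (ZMod (nf i₀) →+ C) :=
      le_card_zmod_hom p (nf i₀) hp C (hnf₀ ▸ dvd_pow_self p (by omega))
        (hc ▸ dvd_pow_self p (by omega))
    have hh1 : 1 ≤ Nat.card (C →+ ZMod (nf i₀)) := Nat.card_pos
    refine le_trans ?_ key
    calc p ^ (m - 1) * (p - 1)
        ≤ (p ^ (e₀ - 1) * (p - 1)) * (p ^ (c - 1) * (p - 1)) * (1 * p) := by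
          have hmeq : m - 1 = (e₀ - 1) + ((c - 1) + 1) := by omega
          rw [hmeq]
          rw [pow_add, pow_add]
          calc p ^ (e₀ - 1) * (p ^ (c - 1) * p ^ 1) * (p - 1)
              = (p ^ (e₀ - 1) * p ^ (c - 1) * p * (p - 1)) * 1 := by ring
            _ ≤ (p ^ (e₀ - 1) * p ^ (c - 1) * p * (p - 1)) * (p - 1) :=
                Nat.mul_le_mul_left _ hp1
            _ = (p ^ (e₀ - 1) * (p - 1)) * (p ^ (c - 1) * (p - 1)) * (1 * p) := by ring
      _ ≤ _ := by
          rw [← hAutA]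
          exact Nat.mul_le_mul (Nat.mul_le_mul le_rfl hC1) (Nat.mul_le_mul hh1 hHom)

/-- Let `p` be a prime and `G` a non-cyclic abelian `p`-group of order `pⁿ`.
Then `|Aut(G)| ≥ pⁿ (p−1)²`. -/
theorem stmt_14 (p n : ℕ) (hp : p.Prime) (G : Type*) [CommGroup G] [Finite G]
    (hcard : Nat.card G = p ^ n) (h : ¬ IsCyclic G) :
    p ^ n * (p - 1) ^ 2 ≤ Nat.card (MulAut G) := by
  classical
  have hcardAut : Nat.card (MulAut G) = Nat.card (Additive G ≃+ Additive G) :=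
    Nat.card_congr MulEquiv.toAdditive
  obtain ⟨ι, fι, nf, h1, ⟨eqv0⟩⟩ := AddCommGroup.equiv_directSum_zmod_of_finite' (Additive G)
  haveI := fι
  let eqv : Additive G ≃+ ∀ i, ZMod (nf i) := eqv0.trans (DirectSum.addEquivProd _)
  have hB : Nat.card (Additive G) = p ^ n := hcard
  have hprod : ∏ i, nf i = p ^ n := by
    have hcongr := Nat.card_congr eqv.toEquiv
    rw [hB, Nat.card_pi] at hcongr
    simpa [Nat.card_zmod] using hcongr.symm
  have hpe : ∀ i, ∃ e, 1 ≤ e ∧ nf i = p ^ e := by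
    intro i
    have hdvd : nf i ∣ p ^ n := hprod ▸ Finset.dvd_prod_of_mem nf (Finset.mem_univ i)
    obtain ⟨e, -, he⟩ := (Nat.dvd_prime_pow hp).mp hdvd
    refine ⟨e, ?_, he⟩
    rcases Nat.eq_zero_or_pos e with rfl | hpos
    · have h2 := h1 i
      rw [he] at h2
      simp at h2
    · exact hpos
  -- `ι` has at least two elements, since `G` is not cyclic
  have hnt : Nontrivial ι := by
    by_contra hns
    rw [not_nontrivial_iff_subsingleton] at hns
    apply h
    rw [← isAddCyclic_additive_iff]
    rcases isEmpty_or_nonempty ι with he | hne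
    · haveI : Subsingleton (∀ i, ZMod (nf i)) :=
        ⟨fun a b => funext fun i => (he.elim i)⟩
      haveI : Subsingleton (Additive G) := eqv.toEquiv.subsingleton
      infer_instance
    · obtain ⟨j₀⟩ := hne
      haveI : Unique ι := ⟨⟨j₀⟩, fun j => Subsingleton.elim _ _⟩
      exact isAddCyclic_of_surjective
        (eqv.trans (AddEquiv.piUnique (fun i => ZMod (nf i)))).symm.toAddMonoidHom
        (eqv.trans (AddEquiv.piUnique (fun i => ZMod (nf i)))).symm.surjective
  obtain ⟨i₀, i₁, hne01⟩ := hnt.exists_pair_ne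
  obtain ⟨e₀, he₀, hnf₀⟩ := hpe i₀
  obtain ⟨e₁, he₁, hnf₁⟩ := hpe i₁
  haveI : NeZero (nf i₀) := ⟨by have := h1 i₀; omega⟩
  haveI : NeZero (nf i₁) := ⟨by have := h1 i₁; omega⟩
  set C := ∀ j : {j // j ≠ i₀}, ZMod (nf j.1) with hCdef
  let E : Additive G ≃+ ZMod (nf i₀) × C := eqv.trans (piSplitAtAdd i₀ _)
  haveI : Finite (ZMod (nf i₀) × C) := Finite.of_equiv (Additive G) E.toEquiv
  haveI : Finite C := Finite.of_surjective (Prod.snd : ZMod (nf i₀) × C → C)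
    Prod.snd_surjective
  have hcardsplit : p ^ e₀ * Nat.card C = p ^ n := by
    have hcongr := Nat.card_congr E.toEquiv
    rw [hB, Nat.card_prod, Nat.card_zmod, hnf₀] at hcongr
    exact hcongr.symm
  obtain ⟨c, hc_le, hc⟩ := (Nat.dvd_prime_pow hp).mp
    (Dvd.intro_left _ hcardsplit : Nat.card C ∣ p ^ n)
  have hsum : e₀ + c = n := by
    have hpow : p ^ (e₀ + c) = p ^ n := by rw [pow_add, ← hc]; exact hcardsplit
    exact Nat.pow_right_injective hp.two_le hpow
  -- `C` is nontrivial
  have hc1 : 1 ≤ c := by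
    by_contra hc0
    have hcC : Nat.card C = 1 := by
      rw [hc]
      have : c = 0 := by omega
      simp [this]
    haveI : Subsingleton C := (Nat.card_eq_one_iff_unique.mp hcC).1
    haveI : Fact (1 < nf i₁) := ⟨h1 i₁⟩
    have hsurj : Function.Surjective (fun g : C => g ⟨i₁, Ne.symm hne01⟩) :=
      Function.surjective_eval _
    haveI := hsurj.subsingleton
    exact false_of_nontrivial_of_subsingleton (ZMod (nf i₁))
  -- automorphism counts
  have hAutB : Nat.card ((ZMod (nf i₀) × C) ≃+ (ZMod (nf i₀) × C))
      = Nat.card (Additive G ≃+ Additive G) :=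
    (Nat.card_congr (AddAut.congr E).toEquiv).symm
  have hAutA : Nat.card (ZMod (nf i₀) ≃+ ZMod (nf i₀)) = p ^ (e₀ - 1) * (p - 1) := by
    rw [card_aut_zmod, hnf₀, Nat.totient_prime_pow hp (by omega)]
  have hC1 : p ^ (c - 1) * (p - 1) ≤ Nat.card (C ≃+ C) :=
    weak_bound p hp c C hc1 hc
  have hHomAC : p ≤ Nat.card (ZMod (nf i₀) →+ C) :=
    le_card_zmod_hom p (nf i₀) hp C (hnf₀ ▸ dvd_pow_self p (by omega))
      (hc ▸ dvd_pow_self p (by omega))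
  have hHomCA : p ≤ Nat.card (C →+ ZMod (nf i₀)) := by
    refine le_trans (le_card_zmod_hom p (nf i₁) hp (ZMod (nf i₀))
      (hnf₁ ▸ dvd_pow_self p (by omega)) ?_) ?_
    · rw [Nat.card_zmod, hnf₀]
      exact dvd_pow_self p (by omega)
    · exact le_card_pi_hom (fun j : {j // j ≠ i₀} => ZMod (nf j.1)) ⟨i₁, Ne.symm hne01⟩
        (ZMod (nf i₀))
  have key := card_parab (A := ZMod (nf i₀)) (B := C)
  rw [hAutB] at key
  rw [hcardAut]
  refine le_trans ?_ key
  calc p ^ n * (p - 1) ^ 2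
      = (p ^ (e₀ - 1) * (p - 1)) * (p ^ (c - 1) * (p - 1)) * (p * p) := by
        have hmeq : n = (e₀ - 1) + ((c - 1) + 2) := by omega
        rw [hmeq, pow_add, pow_add]
        ring
    _ ≤ _ := by
        rw [← hAutA]
        exact Nat.mul_le_mul (Nat.mul_le_mul le_rfl hC1) (Nat.mul_le_mul hHomCA hHomAC)
end

section
/- Let G be a finite abelian group. Then |Aut(G)| ≥ φ(|G|), where φ is Euler's totient function, and equality holds if and only if G is cyclic. -/
open Monoid

/-- totient of `n * m` when all primes of `m` divide `n`. -/
lemma aux_totient_mul (n : ℕ) :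
    ∀ m : ℕ, 0 < m → (∀ q : ℕ, q.Prime → q ∣ m → q ∣ n) → (n * m).totient = n.totient * m := by
  intro m
  induction m using Nat.strong_induction_on with
  | _ m ih =>
    intro hm0 hm
    rcases eq_or_ne m 1 with rfl | hm1
    · simp
    have hp : m.minFac.Prime := Nat.minFac_prime hm1
    obtain ⟨m', hm'⟩ := m.minFac_dvd
    have hm'0 : 0 < m' := by
      rcases Nat.eq_zero_or_pos m' with rfl | h
      · omega
      · exact h
    have hm'lt : m' < m := by
      have h2 : 2 ≤ m.minFac := hp.two_le
      nlinarith
    have hpn : m.minFac ∣ n := hm _ hp m.minFac_dvd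
    have h1 : ∀ q : ℕ, q.Prime → q ∣ m' → q ∣ n := fun q hq hdq =>
      hm q hq (hm' ▸ hdq.mul_left _)
    obtain ⟨P, hP⟩ : ∃ P, P = m.minFac := ⟨_, rfl⟩
    rw [← hP] at hp hpn hm'
    calc (n * m).totient = (P * (n * m')).totient := by rw [hm']; ring_nf
    _ = P * (n * m').totient :=
        Nat.totient_mul_of_prime_of_dvd hp (hpn.mul_right m')
    _ = P * (n.totient * m') := by rw [ih m' hm'lt hm'0 h1]
    _ = n.totient * m := by rw [hm']; ring

/-- product of pairwise coprime divisors divides. -/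
lemma aux_prod_dvd {ι : Type*} (s : Finset ι) (f : ι → ℕ) (N : ℕ)
    (hcop : ∀ i ∈ s, ∀ j ∈ s, i ≠ j → Nat.Coprime (f i) (f j))
    (hdvd : ∀ i ∈ s, f i ∣ N) : (∏ i ∈ s, f i) ∣ N := by
  classical
  induction s using Finset.induction_on with
  | empty => simpa using one_dvd N
  | @insert a s ha ih =>
    rw [Finset.prod_insert ha]
    apply Nat.Coprime.mul_dvd_of_dvd_of_dvd
    · apply Nat.Coprime.prod_right
      intro i hi
      exact hcop a (Finset.mem_insert_self a s) i (Finset.mem_insert_of_mem hi)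
        (by rintro rfl; exact ha hi)
    · exact hdvd a (Finset.mem_insert_self a s)
    · exact ih (fun i hi j hj hij => hcop i (Finset.mem_insert_of_mem hi) j
        (Finset.mem_insert_of_mem hj) hij) (fun i hi => hdvd i (Finset.mem_insert_of_mem hi))

/-- `Equiv.piEquivPiSubtypeProd` as a `MulEquiv`. -/
def auxPiSplit {ι : Type*} (q : ι → Prop) [DecidablePred q] (M : ι → Type*)
    [∀ i, CommGroup (M i)] :
    ((i : ι) → M i) ≃* ((i : {x // q x}) → M i) × ((i : {x // ¬q x}) → M i) :=
  { Equiv.piEquivPiSubtypeProd q M with map_mul' := fun _ _ => rfl }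

/-- automorphism of `A × B` from `σ ∈ Aut A` and `f : B →* A`. -/
def auxAut {A B : Type*} [CommGroup A] [CommGroup B] (σ : MulAut A) (f : B →* A) :
    MulAut (A × B) where
  toFun x := (σ x.1 * f x.2, x.2)
  invFun x := (σ.symm (x.1 * (f x.2)⁻¹), x.2)
  left_inv x := by simp
  right_inv x := by simp
  map_mul' x y := by
    ext
    · simp [mul_mul_mul_comm]
    · rfl

lemma aux_card_lt {A B : Type*} [CommGroup A] [CommGroup B] [Finite A] [Finite B]
    {g : A →* B} {a : A} (hg : g a ≠ 1) :
    Nat.card (MulAut A) * Nat.card (B →* A) < Nat.card (MulAut (A × B)) := by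
  have finAutAB : Finite (MulAut (A × B)) :=
    Finite.of_injective (fun e => (e : A × B → A × B)) DFunLike.coe_injective
  have finAutA : Finite (MulAut A) :=
    Finite.of_injective (fun e => (e : A → A)) DFunLike.coe_injective
  have finHom : Finite (B →* A) :=
    Finite.of_injective (fun e => (e : B → A)) DFunLike.coe_injective
  set F : MulAut A × (B →* A) → MulAut (A × B) := fun sf => auxAut sf.1 sf.2 with hFdef
  have hF : Function.Injective F := by
    rintro ⟨σ, f⟩ ⟨σ', f'⟩ h
    have happ : ∀ x : A × B, ((σ x.1 * f x.2 : A), x.2) = ((σ' x.1 * f' x.2 : A), x.2) :=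
      fun x => MulEquiv.ext_iff.mp h x
    have hσ : σ = σ' := by
      ext a'
      have h1 := congrArg Prod.fst (happ (a', 1))
      simpa using h1
    have hf : f = f' := by
      ext b
      have h1 := congrArg Prod.fst (happ (1, b))
      simpa using h1
    rw [hσ, hf]
  let ψ : MulAut (A × B) :=
    { toFun := fun x => (x.1, g x.1 * x.2)
      invFun := fun x => (x.1, (g x.1)⁻¹ * x.2)
      left_inv := fun x => by simp
      right_inv := fun x => by simp
      map_mul' := fun x y => by
        ext
        · rfl
        · simp [mul_mul_mul_comm] }
  have hψ : ∀ σ f, F (σ, f) ≠ ψ := by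
    intro σ f h
    have h2 := congrArg Prod.snd (MulEquiv.ext_iff.mp h (a, 1))
    simp only [hFdef] at h2
    have h3 : (1 : B) = g a * 1 := h2
    rw [mul_one] at h3
    exact hg h3.symm
  rw [← Nat.card_prod]
  refine lt_of_le_of_ne (Nat.card_le_card_of_injective F hF) fun heq => ?_
  obtain ⟨⟨σ, f⟩, hsf⟩ := ((Nat.bijective_iff_injective_and_card F).mpr ⟨hF, heq⟩).2 ψ
  exact hψ σ f hsf

lemma aux_card_hom (C H : Type*) [CommGroup C] [Finite C] [IsCyclic C] [CommGroup H] [Finite H]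
    (h : Monoid.exponent H ∣ Nat.card C) : Nat.card (H →* C) = Nat.card H := by
  have : NeZero (Nat.card C) := ⟨Nat.card_pos.ne'⟩
  haveI hcyc : IsCyclic Cˣ := isCyclic_of_surjective (toUnits (G := C)) (toUnits (G := C)).surjective
  haveI hbig : HasEnoughRootsOfUnity C (Nat.card C) := by
    constructor
    · obtain ⟨g, hg⟩ := IsCyclic.exists_generator (α := C)
      refine ⟨g, ?_⟩
      have horder : orderOf g = Nat.card C :=
        orderOf_eq_card_of_forall_mem_zpowers hg
      exact horder ▸ IsPrimitiveRoot.orderOf g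
    · infer_instance
  haveI : HasEnoughRootsOfUnity C (Monoid.exponent H) := HasEnoughRootsOfUnity.of_dvd C h
  obtain ⟨eqv⟩ := CommGroup.monoidHom_mulEquiv_of_hasEnoughRootsOfUnity H C
  have e2 : (H →* C) ≃* (H →* Cˣ) :=
    MulEquiv.monoidHomCongrRight (toUnits (G := C))
  calc Nat.card (H →* C) = Nat.card (H →* Cˣ) := Nat.card_congr e2.toEquiv
  _ = Nat.card H := Nat.card_congr eqv.toEquiv

/-- Let `G` be a finite abelian group. Then `|Aut(G)| ≥ φ(|G|)`, with equality
if and only if `G` is cyclic. -/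
theorem stmt_15 (G : Type*) [CommGroup G] [Finite G] :
    Nat.totient (Nat.card G) ≤ Nat.card (MulAut G) ∧
      (Nat.card (MulAut G) = Nat.totient (Nat.card G) ↔ IsCyclic G) := by
  classical
  obtain ⟨ι, fι, p, hp, e, ⟨ea⟩⟩ := AddCommGroup.equiv_directSum_zmod_of_finite (G := Additive G)
  let eG : G ≃* ∀ i, Multiplicative (ZMod (p i ^ e i)) :=
    MulEquiv.toAdditive.symm <| ea.trans <| (DirectSum.addEquivProd _).trans <|
      MulEquiv.toAdditiveRight <| MulEquiv.piMultiplicative _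
  haveI : ∀ i, NeZero (p i ^ e i) := fun i => ⟨pow_ne_zero _ (hp i).pos.ne'⟩
  -- a linear order on ι that sorts by `e` first
  let emb := Fintype.equivFin ι
  letI lo : LinearOrder ι := LinearOrder.lift' (fun i => toLex (e i, emb i))
      (fun a b hab => emb.injective (congrArg (fun x => (ofLex x).2) hab))
  let T : ι → Finset ι := fun i => Finset.univ.filter (fun j => p j = p i)
  have hTne : ∀ i, (T i).Nonempty := fun i => ⟨i, by simp [T]⟩
  let sel : ι → ι := fun i => (T i).max' (hTne i)
  have hselmem : ∀ i, sel i ∈ T i := fun i => (T i).max'_mem _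
  have hselp : ∀ i, p (sel i) = p i := fun i => by
    have h1 := hselmem i
    simp only [T, Finset.mem_filter] at h1
    exact h1.2
  have hsele : ∀ i, e i ≤ e (sel i) := fun i => by
    have h1 : i ≤ sel i := (T i).le_max' i (by simp [T])
    have h2 : toLex (e i, emb i) ≤ toLex (e (sel i), emb (sel i)) := h1
    rcases Prod.Lex.le_iff.mp h2 with h | h
    · exact le_of_lt h
    · exact le_of_eq h.1
  have hTeq : ∀ i j, p j = p i → T j = T i := fun i j hji => by
    ext k
    simp only [T, Finset.mem_filter, hji]
  have maxcongr : ∀ {s t : Finset ι} (h : s = t) (hs : s.Nonempty),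
      s.max' hs = t.max' (h ▸ hs) := by rintro s t rfl hs; rfl
  have hselconst : ∀ i j, p j = p i → sel j = sel i := fun i j hji => by
    show (T j).max' _ = (T i).max' _
    exact maxcongr (hTeq i j hji) _
  have hselsel : ∀ i, sel (sel i) = sel i := fun i => hselconst i (sel i) (hselp i)
  let S : ι → Prop := fun i => sel i = i
  letI : DecidablePred S := Classical.decPred S
  -- the cyclic part and the rest
  let eGC : G ≃* ((i : {x // S x}) → Multiplicative (ZMod (p i.1 ^ e i.1))) ×
      ((i : {x // ¬S x}) → Multiplicative (ZMod (p i.1 ^ e i.1))) :=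
    eG.trans (auxPiSplit S _)
  have cardMZ : ∀ m : ℕ, Nat.card (Multiplicative (ZMod m)) = m := fun m =>
    (Nat.card_congr Multiplicative.toAdd).trans (Nat.card_zmod m)
  have cardC : Nat.card ((i : {x // S x}) → Multiplicative (ZMod (p i.1 ^ e i.1))) =
      ∏ i : {x // S x}, p i.1 ^ e i.1 := by
    rw [Nat.card_pi]
    exact Finset.prod_congr rfl fun i _ => cardMZ _
  have cardH : Nat.card ((i : {x // ¬S x}) → Multiplicative (ZMod (p i.1 ^ e i.1))) =
      ∏ i : {x // ¬S x}, p i.1 ^ e i.1 := by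
    rw [Nat.card_pi]
    exact Finset.prod_congr rfl fun i _ => cardMZ _
  have hCH_card : Nat.card G =
      Nat.card ((i : {x // S x}) → Multiplicative (ZMod (p i.1 ^ e i.1))) *
      Nat.card ((i : {x // ¬S x}) → Multiplicative (ZMod (p i.1 ^ e i.1))) := by
    rw [Nat.card_congr eGC.toEquiv, Nat.card_prod]
  have cardC_pos : 0 < Nat.card ((i : {x // S x}) → Multiplicative (ZMod (p i.1 ^ e i.1))) :=
    Nat.card_pos
  have cardH_pos : 0 < Nat.card ((i : {x // ¬S x}) → Multiplicative (ZMod (p i.1 ^ e i.1))) :=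
    Nat.card_pos
  have hprimesS : ∀ (i j : {x // S x}), i ≠ j → p i.1 ≠ p j.1 := by
    rintro ⟨i, hi⟩ ⟨j, hj⟩ hne hpp
    apply hne
    apply Subtype.ext
    have h1 : sel i = sel j := hselconst j i hpp
    show i = j
    calc i = sel i := hi.symm
    _ = sel j := h1
    _ = j := hj
  have copS : ∀ (i j : {x // S x}), i ≠ j → Nat.Coprime (p i.1 ^ e i.1) (p j.1 ^ e j.1) :=
    fun i j hne => Nat.Coprime.pow _ _ ((Nat.coprime_primes (hp _) (hp _)).mpr (hprimesS i j hne))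
  -- per-prime-power divisibility of the cyclic part's cardinality
  have hdvdC : ∀ j : ι, S (sel j) → p j ^ e (sel j) ∣
      Nat.card ((i : {x // S x}) → Multiplicative (ZMod (p i.1 ^ e i.1))) := by
    intro j hj
    rw [cardC]
    have h1 := Finset.dvd_prod_of_mem (fun i : {x // S x} => p i.1 ^ e i.1)
      (Finset.mem_univ (⟨sel j, hj⟩ : {x // S x}))
    have h2 : p (sel j) ^ e (sel j) ∣ ∏ i : {x // S x}, p i.1 ^ e i.1 := by
      simpa using h1
    rw [hselp j] at h2
    exact h2
  haveI cyc_C : IsCyclic ((i : {x // S x}) → Multiplicative (ZMod (p i.1 ^ e i.1))) := by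
    apply IsCyclic.of_exponent_eq_card
    apply Nat.dvd_antisymm
    · exact Group.exponent_dvd_nat_card
    · rw [cardC]
      apply aux_prod_dvd
      · intro i _ j _ hne; exact copS i j hne
      · intro i _
        have h1 : p i.1 ^ e i.1 = orderOf (Pi.mulSingle i
            (Multiplicative.ofAdd (1 : ZMod (p i.1 ^ e i.1))) :
            (i : {x // S x}) → Multiplicative (ZMod (p i.1 ^ e i.1))) := by
          rw [orderOf_piMulSingle, orderOf_ofAdd_eq_addOrderOf, ZMod.addOrderOf_one]
        rw [h1]
        exact Monoid.order_dvd_exponent _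
  have expH : Monoid.exponent ((i : {x // ¬S x}) → Multiplicative (ZMod (p i.1 ^ e i.1))) ∣
      Nat.card ((i : {x // S x}) → Multiplicative (ZMod (p i.1 ^ e i.1))) := by
    rw [Monoid.exponent_pi]
    apply Finset.lcm_dvd
    intro j _
    have hexp : Monoid.exponent (Multiplicative (ZMod (p j.1 ^ e j.1))) = p j.1 ^ e j.1 := by
      rw [IsCyclic.exponent_eq_card, cardMZ]
    rw [hexp]
    exact dvd_trans (pow_dvd_pow _ (hsele j.1)) (hdvdC j.1 (hselsel j.1))
  have hphi : Nat.totient (Nat.card G) =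
      Nat.totient (Nat.card ((i : {x // S x}) → Multiplicative (ZMod (p i.1 ^ e i.1)))) *
      Nat.card ((i : {x // ¬S x}) → Multiplicative (ZMod (p i.1 ^ e i.1))) := by
    rw [hCH_card]
    apply aux_totient_mul _ _ cardH_pos
    intro q hq hqH
    rw [cardH] at hqH
    obtain ⟨j, -, hj⟩ := (Prime.dvd_finset_prod_iff hq.prime _).mp hqH
    have hej : e j.1 ≠ 0 := by
      rintro h0
      rw [h0, pow_zero, Nat.dvd_one] at hj
      exact hq.ne_one hj
    have hqp : q = p j.1 := (Nat.prime_dvd_prime_iff_eq hq (hp _)).mp (hq.dvd_of_dvd_pow hj)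
    rw [hqp]
    refine dvd_trans (dvd_pow_self (p j.1) ?_) (hdvdC j.1 (hselsel j.1))
    have := hsele j.1
    omega
  by_cases hcyc : IsCyclic G
  · exact ⟨(IsCyclic.card_mulAut G).ge, iff_of_true (IsCyclic.card_mulAut G) hcyc⟩
  · -- the complement must be nontrivial
    have hHne : Nat.card ((i : {x // ¬S x}) → Multiplicative (ZMod (p i.1 ^ e i.1))) ≠ 1 := by
      intro h1
      apply hcyc
      haveI : Subsingleton ((i : {x // ¬S x}) → Multiplicative (ZMod (p i.1 ^ e i.1))) :=
        (Nat.card_eq_one_iff_unique.mp h1).1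
      let f : ((i : {x // S x}) → Multiplicative (ZMod (p i.1 ^ e i.1))) →* G :=
        eGC.symm.toMonoidHom.comp (MonoidHom.inl _ _)
      have hsurj : Function.Surjective f := by
        intro x
        refine ⟨(eGC x).1, ?_⟩
        show eGC.symm ((eGC x).1, 1) = x
        have h2 : ((eGC x).1, (1 : (i : {x // ¬S x}) → Multiplicative (ZMod (p i.1 ^ e i.1)))) =
            eGC x := by
          rw [Subsingleton.elim (1 : (i : {x // ¬S x}) → Multiplicative (ZMod (p i.1 ^ e i.1)))
            (eGC x).2]
        rw [h2, eGC.symm_apply_apply]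
      exact isCyclic_of_surjective f hsurj
    obtain ⟨j, hj⟩ : ∃ j : {x // ¬S x}, e j.1 ≠ 0 := by
      by_contra hall
      push_neg at hall
      apply hHne
      rw [cardH]
      apply Finset.prod_eq_one
      intro j _
      rw [hall j, pow_zero]
    -- a nontrivial homomorphism from the cyclic part to the complement
    have hjS : S (sel j.1) := hselsel j.1
    have hdvd : p j.1 ^ e j.1 ∣ p (sel j.1) ^ e (sel j.1) := by
      rw [hselp]
      exact pow_dvd_pow _ (hsele j.1)
    let i0 : {x // S x} := ⟨sel j.1, hjS⟩
    let ψcast : Multiplicative (ZMod (p i0.1 ^ e i0.1)) →*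
        Multiplicative (ZMod (p j.1 ^ e j.1)) :=
      AddMonoidHom.toMultiplicative ((ZMod.castHom hdvd (ZMod (p j.1 ^ e j.1))).toAddMonoidHom)
    let g : ((i : {x // S x}) → Multiplicative (ZMod (p i.1 ^ e i.1))) →*
        ((i : {x // ¬S x}) → Multiplicative (ZMod (p i.1 ^ e i.1))) :=
      (MonoidHom.mulSingle _ j).comp (ψcast.comp (Pi.evalMonoidHom _ i0))
    let a : (i : {x // S x}) → Multiplicative (ZMod (p i.1 ^ e i.1)) :=
      Pi.mulSingle i0 (Multiplicative.ofAdd (1 : ZMod (p i0.1 ^ e i0.1)))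
    haveI : Fact (1 < p j.1 ^ e j.1) := ⟨Nat.one_lt_pow hj (hp j.1).one_lt⟩
    have hga : g a ≠ 1 := by
      intro hg1
      have h2 := congrFun hg1 j
      have h3 : ψcast (a i0) = 1 := by
        simpa [g, Pi.mulSingle_apply] using h2
      have h4 : a i0 = Multiplicative.ofAdd (1 : ZMod (p i0.1 ^ e i0.1)) := by
        simp [a]
      rw [h4] at h3
      have h5 : (ZMod.castHom hdvd (ZMod (p j.1 ^ e j.1))) 1 = 0 := h3
      rw [map_one] at h5
      exact one_ne_zero h5
    have key : Nat.totient (Nat.card G) < Nat.card (MulAut G) := by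
      have h1 : Nat.card (MulAut G) = Nat.card (MulAut
          (((i : {x // S x}) → Multiplicative (ZMod (p i.1 ^ e i.1))) ×
           ((i : {x // ¬S x}) → Multiplicative (ZMod (p i.1 ^ e i.1))))) :=
        Nat.card_congr (MulAut.congr eGC).toEquiv
      calc Nat.totient (Nat.card G)
          = Nat.totient (Nat.card ((i : {x // S x}) → Multiplicative (ZMod (p i.1 ^ e i.1)))) *
            Nat.card ((i : {x // ¬S x}) → Multiplicative (ZMod (p i.1 ^ e i.1))) := hphi
      _ = Nat.card (MulAut ((i : {x // S x}) → Multiplicative (ZMod (p i.1 ^ e i.1)))) *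
            Nat.card (((i : {x // ¬S x}) → Multiplicative (ZMod (p i.1 ^ e i.1))) →*
              ((i : {x // S x}) → Multiplicative (ZMod (p i.1 ^ e i.1)))) := by
          rw [IsCyclic.card_mulAut, aux_card_hom _ _ expH]
      _ < Nat.card (MulAut
            (((i : {x // S x}) → Multiplicative (ZMod (p i.1 ^ e i.1))) ×
             ((i : {x // ¬S x}) → Multiplicative (ZMod (p i.1 ^ e i.1))))) := aux_card_lt hga
      _ = Nat.card (MulAut G) := h1.symm
    exact ⟨key.le, iff_of_false key.ne' hcyc⟩
end

section
/- For every prime p, f(Z_p × Z_p) = 1 + (p+1)(p−1)²/p; equivalently, S(Z_p × Z_p) = p² + p·(p+1)(p−1)². -/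
section Aux
variable (p : ℕ) [hp : Fact p.Prime]

local notation "G" => Multiplicative (ZMod p × ZMod p)

lemma cardG' : Nat.card G = p ^ 2 := by
  simp [Nat.card_eq_fintype_card, ZMod.card, sq]

lemma order_eq' (g : G) (hg : g ≠ 1) : orderOf g = p := by
  have h1 : g ^ p = 1 := by
    show Multiplicative.ofAdd (p • g.toAdd) = 1
    have : p • g.toAdd = 0 := by
      ext <;> exact ZModModule.char_nsmul_eq_zero p _
    rw [this]; rfl
  rcases (Nat.dvd_prime hp.out).mp (orderOf_dvd_of_pow_eq_one h1) with h | h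
  · exact absurd (orderOf_eq_one_iff.mp h) hg
  · exact h

lemma card_mulAut_top : Nat.card (MulAut G) = (p ^ 2 - 1) * (p ^ 2 - p) := by
  have e1 : MulAut G ≃ ((ZMod p × ZMod p) ≃+ (ZMod p × ZMod p)) :=
    AddEquiv.toMultiplicative.symm
  have e2 : ((ZMod p × ZMod p) ≃+ (ZMod p × ZMod p)) ≃
      ((ZMod p × ZMod p) ≃ₗ[ZMod p] (ZMod p × ZMod p)) :=
    { toFun := fun e => { e with map_smul' := fun c x => ZMod.map_smul e.toAddMonoidHom c x }
      invFun := fun f => f.toAddEquiv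
      left_inv := fun e => rfl
      right_inv := fun f => rfl }
  let b : (Fin 2 → ZMod p) ≃ₗ[ZMod p] (ZMod p × ZMod p) := LinearEquiv.finTwoArrow (ZMod p) (ZMod p)
  have e3 : ((ZMod p × ZMod p) ≃ₗ[ZMod p] (ZMod p × ZMod p)) ≃
      ((Fin 2 → ZMod p) ≃ₗ[ZMod p] (Fin 2 → ZMod p)) :=
    { toFun := fun f => b.trans (f.trans b.symm)
      invFun := fun g => b.symm.trans (g.trans b)
      left_inv := fun f => by ext x <;> simp [b]
      right_inv := fun g => by
        ext x i
        have hx : (![x 0, x 1] : Fin 2 → ZMod p) = x := by funext j; fin_cases j <;> rfl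
        simp [b, hx]
        fin_cases i <;> simp }
  have e4 : ((Fin 2 → ZMod p) ≃ₗ[ZMod p] (Fin 2 → ZMod p)) ≃ GL (Fin 2) (ZMod p) :=
    ((Matrix.GeneralLinearGroup.toLin.trans
      (LinearMap.GeneralLinearGroup.generalLinearEquiv (ZMod p) (Fin 2 → ZMod p))).toEquiv).symm
  rw [Nat.card_congr (((e1.trans e2).trans e3).trans e4), Matrix.card_GL_field]
  simp [Fin.prod_univ_two, ZMod.card]

lemma count_lines' :
    letI : Fintype (Subgroup G) := Fintype.ofFinite _
    letI : DecidablePred (fun H : Subgroup G => Nat.card H = p) := Classical.decPred _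
    (Finset.univ.filter fun H : Subgroup G => Nat.card H = p).card = p + 1 := by
  letI : Fintype (Subgroup G) := Fintype.ofFinite _
  letI : DecidablePred (fun H : Subgroup G => Nat.card H = p) := Classical.decPred _
  classical
  set L := (Finset.univ.filter fun H : Subgroup G => Nat.card H = p) with hL
  set Ω : Finset G := Finset.univ.filter (· ≠ 1) with hΩdef
  have hΩ : Ω.card = p ^ 2 - 1 := by
    rw [hΩdef, Finset.filter_ne', Finset.card_erase_of_mem (Finset.mem_univ _)]
    have : (Finset.univ : Finset G).card = p ^ 2 := by
      rw [Finset.card_univ, ← Nat.card_eq_fintype_card]; exact cardG' p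
    omega
  have key : ∀ g ∈ Ω, Subgroup.zpowers g ∈ L := by
    intro g hg
    rw [hL, Finset.mem_filter]
    refine ⟨Finset.mem_univ _, ?_⟩
    rw [Nat.card_zpowers]
    exact order_eq' p g (by simpa [hΩdef] using hg)
  have fiber : ∀ H ∈ L, (Ω.filter fun g => Subgroup.zpowers g = H).card = p - 1 := by
    intro H hH
    rw [hL, Finset.mem_filter] at hH
    have hcardH : Nat.card H = p := hH.2
    have heq : (Ω.filter fun g => Subgroup.zpowers g = H)
        = (H : Set G).toFinset.erase 1 := by
      ext g
      simp only [Finset.mem_filter, Finset.mem_erase, hΩdef, Finset.mem_univ, true_and,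
        Set.mem_toFinset, SetLike.mem_coe]
      constructor
      · rintro ⟨hg1, rfl⟩
        exact ⟨hg1, Subgroup.mem_zpowers g⟩
      · rintro ⟨hg1, hgH⟩
        refine ⟨hg1, ?_⟩
        apply Subgroup.eq_of_le_of_card_ge ((Subgroup.zpowers_le).mpr hgH)
        rw [hcardH, Nat.card_zpowers, order_eq' p g hg1]
    rw [heq, Finset.card_erase_of_mem]
    · rw [Set.toFinset_card, ← Nat.card_eq_fintype_card]
      have : Nat.card ↥(H : Set G) = Nat.card H := rfl
      rw [this, hcardH]
    · simp [Subgroup.one_mem]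
  have main := Finset.card_eq_sum_card_fiberwise key
  rw [hΩ, Finset.sum_congr rfl fiber, Finset.sum_const, smul_eq_mul] at main
  have h2 : 2 ≤ p := hp.out.two_le
  have hsq : p ^ 2 - 1 = (p + 1) * (p - 1) := by
    cases p with
    | zero => omega
    | succ q =>
      have h1 : (q + 1) ^ 2 = q * q + 2 * q + 1 := by ring
      have h2' : (q + 1 + 1) * (q + 1 - 1) = q * q + 2 * q := by
        simp only [Nat.add_sub_cancel]; ring
      omega
  rw [hsq] at main
  exact Nat.eq_of_mul_eq_mul_right (by omega) main.symm

end Aux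

/-- For every prime `p`, `f(ℤ_p × ℤ_p) = 1 + (p+1)(p−1)²/p`, i.e.
`S(ℤ_p × ℤ_p) = p² + p(p+1)(p−1)²`. -/
theorem stmt_17 (p : ℕ) (hp : p.Prime) :
    S (Multiplicative (ZMod p × ZMod p)) = p ^ 2 + p * ((p + 1) * (p - 1) ^ 2) := by
  haveI : Fact p.Prime := ⟨hp⟩
  classical
  letI : Fintype (Subgroup (Multiplicative (ZMod p × ZMod p))) := Fintype.ofFinite _
  set G := Multiplicative (ZMod p × ZMod p) with hG
  letI : DecidablePred (fun H : Subgroup G => Nat.card H = p) := Classical.decPred _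
  have h2 : 2 ≤ p := hp.two_le
  rw [S, finsum_eq_sum_of_fintype]
  set L := (Finset.univ.filter fun H : Subgroup G => Nat.card H = p) with hLdef
  -- trichotomy
  have tri : ∀ H : Subgroup G, H = ⊥ ∨ H = ⊤ ∨ Nat.card H = p := by
    intro H
    have hdvd : Nat.card H ∣ p ^ 2 := (cardG' p) ▸ Subgroup.card_subgroup_dvd_card H
    rcases (Nat.dvd_prime_pow hp).mp hdvd with ⟨k, hk, hcard⟩
    interval_cases k
    · left; exact Subgroup.card_eq_one.mp (by simpa using hcard)
    · right; right; simpa using hcard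
    · right; left
      exact Subgroup.eq_top_of_card_eq H (hcard.trans (cardG' p).symm)
  have hbotL : (⊥ : Subgroup G) ∉ insert ⊤ L := by
    simp only [Finset.mem_insert, hLdef, Finset.mem_filter, Finset.mem_univ, true_and]
    push_neg
    constructor
    · intro h
      have := Subgroup.card_bot (G := G)
      rw [h, Subgroup.card_top, cardG' p] at this
      nlinarith
    · rw [Subgroup.card_bot]; omega
  have htopL : (⊤ : Subgroup G) ∉ L := by
    simp only [hLdef, Finset.mem_filter, Finset.mem_univ, true_and]
    rw [Subgroup.card_top, cardG' p]
    nlinarith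
  have huniv : (Finset.univ : Finset (Subgroup G)) = insert ⊥ (insert ⊤ L) := by
    ext H
    simp only [Finset.mem_univ, true_iff, Finset.mem_insert]
    rcases tri H with h | h | h
    · exact Or.inl h
    · exact Or.inr (Or.inl h)
    · exact Or.inr (Or.inr (by rw [hLdef, Finset.mem_filter]; exact ⟨Finset.mem_univ _, h⟩))
  rw [huniv, Finset.sum_insert hbotL, Finset.sum_insert htopL]
  -- value at ⊥
  have hbotval : Nat.card (MulAut ↥(⊥ : Subgroup G)) = 1 := by
    haveI : Subsingleton (MulAut ↥(⊥ : Subgroup G)) :=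
      ⟨fun a b => MulEquiv.ext fun x => Subsingleton.elim _ _⟩
    exact Nat.card_eq_one_iff_unique.mpr ⟨inferInstance, ⟨1⟩⟩
  -- value at ⊤
  have htopval : Nat.card (MulAut ↥(⊤ : Subgroup G)) = (p ^ 2 - 1) * (p ^ 2 - p) := by
    rw [Nat.card_congr (MulAut.congr Subgroup.topEquiv).toEquiv]
    exact card_mulAut_top p
  -- value on L
  have hLval : ∀ H ∈ L, Nat.card (MulAut ↥H) = p - 1 := by
    intro H hH
    rw [hLdef, Finset.mem_filter] at hH
    haveI : IsCyclic ↥H := isCyclic_of_prime_card hH.2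
    rw [IsCyclic.card_mulAut, hH.2, Nat.totient_prime hp]
  rw [hbotval, htopval, Finset.sum_congr rfl hLval, Finset.sum_const, smul_eq_mul]
  have hLcard : L.card = p + 1 := count_lines' p
  rw [hLcard]
  -- arithmetic
  cases p with
  | zero => omega
  | succ q =>
    have e1 : (q + 1) ^ 2 - 1 = q * q + 2 * q := by
      have : (q + 1) ^ 2 = q * q + 2 * q + 1 := by ring
      omega
    have e2 : (q + 1) ^ 2 - (q + 1) = q * q + q := by
      have : (q + 1) ^ 2 = q * q + 2 * q + 1 := by ring
      omega
    simp only [Nat.add_sub_cancel, e1, e2]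
    ring
end
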